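/- arXiv:1711.11558 — 7 statements merged into one kernel-verified Lean document; each statement's English description precedes it below -/
import Mathlib

section
/- Let E be a σ-Dedekind complete Banach lattice (every order-bounded sequence has a supremum). Then every orthogonally additive functional Φ : E → ℝ (i.e. Φ(x + y) = Φ(x) + Φ(y) whenever |x| ⊓ |y| = 0) is a valuation: Φ(f ⊔ g) + Φ(f ⊓ g) = Φ(f) + Φ(g) for all f, g ∈ E and Φ(0) = 0. -/
section aux
variable {E : Type*} [Lattice E] [AddCommGroup E] [CovariantClass E E (· + ·) (· ≤ ·)]

lemma aux_inf_add_le (u x y : E) (hu : 0 ≤ u) (hx : 0 ≤ x) (hy : 0 ≤ y) :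
    u ⊓ (x + y) ≤ u ⊓ x + u ⊓ y := by
  set t := u ⊓ (x + y) with ht
  have h1 : t - u ⊓ x = (t - u) ⊔ (t - x) := sub_inf u x t
  have h2 : (t - u) ⊔ (t - x) ≤ u ⊓ y := by
    apply sup_le
    · exact le_inf ((sub_nonpos.mpr inf_le_left).trans hu)
        ((sub_nonpos.mpr inf_le_left).trans hy)
    · refine le_inf ?_ (sub_le_iff_le_add'.mpr inf_le_right)
      exact sub_le_iff_le_add.mpr (inf_le_left.trans (le_add_of_nonneg_right hx))
  have h3 : t - u ⊓ x ≤ u ⊓ y := h1 ▸ h2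
  calc t = (t - u ⊓ x) + u ⊓ x := by abel
  _ ≤ u ⊓ y + u ⊓ x := add_le_add_left h3 _
  _ = u ⊓ x + u ⊓ y := by abel

lemma aux_disj_add (x y w : E) (hx : 0 ≤ x) (hy : 0 ≤ y) (hw : 0 ≤ w)
    (h1 : x ⊓ w = 0) (h2 : y ⊓ w = 0) : (x + y) ⊓ w = 0 := by
  have h3 : w ⊓ (x + y) ≤ w ⊓ x + w ⊓ y := aux_inf_add_le w x y hw hx hy
  rw [inf_comm] at h1 h2
  rw [h1, h2, add_zero] at h3
  rw [inf_comm]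
  exact le_antisymm h3 (le_inf hw (add_nonneg hx hy))

lemma aux_disj_smul (u w : E) (hu : 0 ≤ u) (hw : 0 ≤ w) (h : u ⊓ w = 0) (n : ℕ) :
    (n • u) ⊓ w = 0 := by
  induction n with
  | zero => simpa using le_antisymm inf_le_left (le_inf le_rfl hw)
  | succ n ih =>
      rw [succ_nsmul]
      exact aux_disj_add _ _ _ (nsmul_nonneg hu n) hu hw ih h

lemma aux_disj_mono {x y x' y' : E} (hx' : |x'| ≤ x) (hy' : |y'| ≤ y)
    (h : x ⊓ y = 0) : |x'| ⊓ |y'| = 0 :=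
  le_antisymm ((inf_le_inf hx' hy').trans h.le) (le_inf (abs_nonneg _) (abs_nonneg _))

end aux

/-- Existence of the band projection `P_u` applied to a positive element `y`,
constructed as the supremum of `y ⊓ n • u` via σ-Dedekind completeness. -/
lemma aux_bandP {E : Type*} [NormedAddCommGroup E] [Lattice E] [HasSolidNorm E]
    [IsOrderedAddMonoid E]
    (hDed : ∀ (s : ℕ → E) (b : E), (∀ n, |s n| ≤ b) → ∃ x : E, IsLUB (Set.range s) x)
    (u y : E) (hu : 0 ≤ u) (hy : 0 ≤ y) :
    ∃ p : E, 0 ≤ p ∧ p ≤ y ∧ (y - p) ⊓ u = 0 ∧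
      ∀ w, 0 ≤ w → u ⊓ w = 0 → p ⊓ w = 0 := by
  set s : ℕ → E := fun n => y ⊓ n • u with hs
  have hsnn : ∀ n, 0 ≤ s n := fun n => le_inf hy (nsmul_nonneg hu n)
  have hsle : ∀ n, s n ≤ y := fun n => inf_le_left
  obtain ⟨p, hp⟩ := hDed s y (fun n => by rw [abs_of_nonneg (hsnn n)]; exact hsle n)
  have hmem : ∀ n, s n ≤ p := fun n => hp.1 ⟨n, rfl⟩
  have hple : p ≤ y := hp.2 (fun z ⟨n, hn⟩ => hn ▸ hsle n)
  have hpnn : 0 ≤ p := (hsnn 0).trans (hmem 0)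
  refine ⟨p, hpnn, hple, ?_, ?_⟩
  · set d := (y - p) ⊓ u with hd
    have hdnn : 0 ≤ d := le_inf (sub_nonneg.mpr hple) hu
    have key : ∀ n, s n + d ≤ p := by
      intro n
      have h1 : s n + d ≤ y := by
        calc s n + d ≤ p + (y - p) := add_le_add (hmem n) inf_le_left
        _ = y := by abel
      have h2 : s n + d ≤ (n + 1) • u := by
        rw [succ_nsmul]
        exact add_le_add inf_le_right inf_le_right
      exact (le_inf h1 h2).trans (hmem (n + 1))
    have h4 : p ≤ p - d := hp.2 (fun z ⟨n, hn⟩ => hn ▸ (le_sub_iff_add_le.mpr (key n)))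
    have h5 : d ≤ 0 := by
      have := sub_le_sub_right h4 p
      simpa using neg_nonneg.mp (by simpa using this)
    exact le_antisymm h5 hdnn
  · intro w hw hduw
    set c := p ⊓ w with hc
    have hcnn : 0 ≤ c := le_inf hpnn hw
    have key : ∀ n, s n + c ≤ p := by
      intro n
      have hdisj : s n ⊓ c = 0 := by
        have h1 : (n • u) ⊓ w = 0 := aux_disj_smul u w hu hw hduw n
        exact le_antisymm ((inf_le_inf inf_le_right inf_le_right).trans h1.le)
          (le_inf (hsnn n) hcnn)
      have h2 : s n + c = s n ⊔ c := by
        have := inf_add_sup (s n) c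
        rw [hdisj, zero_add] at this
        exact this.symm
      rw [h2]
      exact sup_le (hmem n) inf_le_left
    have h4 : p ≤ p - c := hp.2 (fun z ⟨n, hn⟩ => hn ▸ (le_sub_iff_add_le.mpr (key n)))
    have h5 : c ≤ 0 := by
      have := sub_le_sub_right h4 p
      simpa using neg_nonneg.mp (by simpa using this)
    exact le_antisymm h5 hcnn

lemma aux_key {E : Type*} [NormedAddCommGroup E] [Lattice E] [HasSolidNorm E]
    [IsOrderedAddMonoid E]
    (hDed : ∀ (s : ℕ → E) (b : E), (∀ n, |s n| ≤ b) → ∃ x : E, IsLUB (Set.range s) x)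
    (Φ : E → ℝ)
    (hΦ : ∀ x y : E, |x| ⊓ |y| = 0 → Φ (x + y) = Φ x + Φ y)
    (h u v : E) (hu0 : 0 ≤ u) (hv0 : 0 ≤ v) (huv : u ⊓ v = 0) :
    Φ (h + u + v) + Φ h = Φ (h + u) + Φ (h + v) := by
  have habs_sub : ∀ x y : E, |x - y| ≤ |x| + |y| := fun x y => by
    rw [sub_eq_add_neg]
    calc |x + -y| ≤ |x| + |-y| := abs_add_le _ _
    _ = |x| + |y| := by rw [abs_neg]
  obtain ⟨pa, hpa0, hpale, hpau, hpaw⟩ := aux_bandP hDed u (h ⊔ 0) hu0 le_sup_right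
  obtain ⟨pb, hpb0, hpble, hpbu, hpbw⟩ := aux_bandP hDed u ((-h) ⊔ 0) hu0 le_sup_right
  have hab : (h ⊔ 0) - ((-h) ⊔ 0) = h := by
    have h1 : h ⊓ 0 + (h ⊔ 0) = h + 0 := inf_add_sup h 0
    have h2 : -((-h) ⊔ 0) = h ⊓ 0 := by rw [neg_sup, neg_neg, neg_zero]
    calc (h ⊔ 0) - ((-h) ⊔ 0) = h ⊔ 0 + (h ⊓ 0) := by rw [sub_eq_add_neg, h2]
    _ = h := by rw [add_comm]; simpa using h1
  have hpaY0 : 0 ≤ (h ⊔ 0) - pa := sub_nonneg.mpr hpale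
  have hpbY0 : 0 ≤ ((-h) ⊔ 0) - pb := sub_nonneg.mpr hpble
  have hX0 : 0 ≤ pa + pb := add_nonneg hpa0 hpb0
  have hY0 : 0 ≤ ((h ⊔ 0) - pa) + (((-h) ⊔ 0) - pb) := add_nonneg hpaY0 hpbY0
  have habs1 : |pa - pb| ≤ pa + pb := by
    calc |pa - pb| ≤ |pa| + |pb| := habs_sub pa pb
    _ = pa + pb := by rw [abs_of_nonneg hpa0, abs_of_nonneg hpb0]
  have habs2 : |h - (pa - pb)| ≤ ((h ⊔ 0) - pa) + (((-h) ⊔ 0) - pb) := by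
    have heq : h - (pa - pb) = ((h ⊔ 0) - pa) - (((-h) ⊔ 0) - pb) := by
      rw [eq_comm]
      calc ((h ⊔ 0) - pa) - (((-h) ⊔ 0) - pb) = ((h ⊔ 0) - ((-h) ⊔ 0)) - (pa - pb) := by abel
      _ = h - (pa - pb) := by rw [hab]
    rw [heq]
    calc |((h ⊔ 0) - pa) - (((-h) ⊔ 0) - pb)| ≤ |(h ⊔ 0) - pa| + |((-h) ⊔ 0) - pb| :=
      habs_sub _ _
    _ = _ := by rw [abs_of_nonneg hpaY0, abs_of_nonneg hpbY0]
  -- disjointness facts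
  have dYu : (((h ⊔ 0) - pa) + (((-h) ⊔ 0) - pb)) ⊓ u = 0 :=
    aux_disj_add _ _ _ hpaY0 hpbY0 hu0 hpau hpbu
  have dXY : (pa + pb) ⊓ (((h ⊔ 0) - pa) + (((-h) ⊔ 0) - pb)) = 0 :=
    aux_disj_add _ _ _ hpa0 hpb0 hY0 (hpaw _ hY0 (by rw [inf_comm]; exact dYu))
      (hpbw _ hY0 (by rw [inf_comm]; exact dYu))
  have dXv : (pa + pb) ⊓ v = 0 :=
    aux_disj_add _ _ _ hpa0 hpb0 hv0 (hpaw v hv0 huv) (hpbw v hv0 huv)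
  have dYvX : ((((h ⊔ 0) - pa) + (((-h) ⊔ 0) - pb)) + v) ⊓ (pa + pb) = 0 :=
    aux_disj_add _ _ _ hY0 hv0 hX0 (by rw [inf_comm]; exact dXY) (by rw [inf_comm]; exact dXv)
  have dYXu : (((h ⊔ 0) - pa) + (((-h) ⊔ 0) - pb)) ⊓ ((pa + pb) + u) = 0 := by
    rw [inf_comm]
    exact aux_disj_add _ _ _ hX0 hu0 hY0 dXY (by rw [inf_comm]; exact dYu)
  have dYvXu : ((((h ⊔ 0) - pa) + (((-h) ⊔ 0) - pb)) + v) ⊓ ((pa + pb) + u) = 0 := by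
    rw [inf_comm]
    refine aux_disj_add _ _ _ hX0 hu0 (add_nonneg hY0 hv0) (by rw [inf_comm]; exact dYvX) ?_
    rw [inf_comm]
    exact aux_disj_add _ _ _ hY0 hv0 hu0 dYu (by rw [inf_comm]; exact huv)
  -- abs bounds for combined elements
  have habsYv : |(h - (pa - pb)) + v| ≤ (((h ⊔ 0) - pa) + (((-h) ⊔ 0) - pb)) + v := by
    calc |(h - (pa - pb)) + v| ≤ |h - (pa - pb)| + |v| := abs_add_le _ _
    _ ≤ _ := add_le_add habs2 (abs_of_nonneg hv0).le
  have habsXu : |(pa - pb) + u| ≤ (pa + pb) + u := by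
    calc |(pa - pb) + u| ≤ |pa - pb| + |u| := abs_add_le _ _
    _ ≤ _ := add_le_add habs1 (abs_of_nonneg hu0).le
  -- four applications of orthogonal additivity
  have e1 : Φ (h + u) = Φ (h - (pa - pb)) + Φ ((pa - pb) + u) := by
    have heq : h + u = (h - (pa - pb)) + ((pa - pb) + u) := by abel
    rw [heq]
    exact hΦ _ _ (aux_disj_mono habs2 habsXu dYXu)
  have e2 : Φ (h + v) = Φ ((h - (pa - pb)) + v) + Φ (pa - pb) := by
    have heq : h + v = ((h - (pa - pb)) + v) + (pa - pb) := by abel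
    rw [heq]
    exact hΦ _ _ (aux_disj_mono habsYv habs1 dYvX)
  have e3 : Φ (h + u + v) = Φ ((h - (pa - pb)) + v) + Φ ((pa - pb) + u) := by
    have heq : h + u + v = ((h - (pa - pb)) + v) + ((pa - pb) + u) := by abel
    rw [heq]
    exact hΦ _ _ (aux_disj_mono habsYv habsXu dYvXu)
  have e4 : Φ h = Φ (h - (pa - pb)) + Φ (pa - pb) := by
    have heq : (h - (pa - pb)) + (pa - pb) = h := by abel
    conv_lhs => rw [← heq]
    exact hΦ _ _ (aux_disj_mono habs2 habs1 (by rw [inf_comm]; exact dXY))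
  rw [e1, e2, e3, e4]; ring

/-- On a σ-Dedekind complete Banach lattice, every orthogonally
additive functional is a valuation. -/
theorem stmt3 {E : Type*} [NormedAddCommGroup E] [Lattice E] [HasSolidNorm E]
    [IsOrderedAddMonoid E] [CompleteSpace E]
    (hDed : ∀ (s : ℕ → E) (b : E), (∀ n, |s n| ≤ b) → ∃ x : E, IsLUB (Set.range s) x)
    (Φ : E → ℝ)
    (hΦ : ∀ x y : E, |x| ⊓ |y| = 0 → Φ (x + y) = Φ x + Φ y) :
    (∀ f g : E, Φ (f ⊔ g) + Φ (f ⊓ g) = Φ f + Φ g) ∧ Φ (0 : E) = 0 := by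
  have hzero : Φ (0 : E) = 0 := by
    have := hΦ 0 0 (by simp)
    simpa using this.symm
  refine ⟨fun f g => ?_, hzero⟩
  have hu0 : (0:E) ≤ f - f ⊓ g := sub_nonneg.mpr inf_le_left
  have hv0 : (0:E) ≤ g - f ⊓ g := sub_nonneg.mpr inf_le_right
  have huv : (f - f ⊓ g) ⊓ (g - f ⊓ g) = 0 := by
    rw [← inf_sub]; simp
  have key := aux_key hDed Φ hΦ (f ⊓ g) (f - f ⊓ g) (g - f ⊓ g) hu0 hv0 huv
  have hf : f ⊓ g + (f - f ⊓ g) = f := by abel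
  have hg : f ⊓ g + (g - f ⊓ g) = g := by abel
  have hsup : f ⊓ g + (f - f ⊓ g) + (g - f ⊓ g) = f ⊔ g := by
    have h1 : f ⊓ g + (f ⊔ g) = f + g := inf_add_sup f g
    have h2 : f ⊔ g = f + g - f ⊓ g := by rw [← h1]; abel
    rw [h2]; abel
  rw [hsup, hf, hg] at key
  linarith [key]
end

section
/- Let (Ω, Σ) be a measurable space and μ, ν two finite nonatomic measures on it. If ν(A) = ν(A′) whenever μ(A) = μ(A′) (for A, A′ ∈ Σ), then there exists c ∈ ℝ such that ν(A) = c·μ(A) for every A ∈ Σ. -/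
open MeasureTheory
open scoped ENNReal

section Aux
variable {Ω : Type*} [MeasurableSpace Ω] (μ : Measure Ω) [IsFiniteMeasure μ]

lemma aux_half
    (hna : ∀ A : Set Ω, MeasurableSet A → 0 < μ A →
      ∃ B ⊆ A, MeasurableSet B ∧ 0 < μ B ∧ μ B < μ A)
    (A : Set Ω) (hA : MeasurableSet A) (h0 : 0 < μ A) :
    ∃ B ⊆ A, MeasurableSet B ∧ 0 < μ B ∧ 2 * μ B ≤ μ A := by
  obtain ⟨B, hBA, hBm, hB0, hBlt⟩ := hna A hA h0
  rcases le_or_gt (2 * μ B) (μ A) with hc | hc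
  · exact ⟨B, hBA, hBm, hB0, hc⟩
  · refine ⟨A \ B, Set.diff_subset, hA.diff hBm, ?_, ?_⟩
    · rw [measure_diff hBA hBm.nullMeasurableSet (measure_ne_top μ B)]
      exact tsub_pos_of_lt hBlt
    · rw [measure_diff hBA hBm.nullMeasurableSet (measure_ne_top μ B), two_mul]
      have h1 : μ A - μ B ≤ μ B := by
        rw [tsub_le_iff_right, ← two_mul]
        exact le_of_lt hc
      calc μ A - μ B + (μ A - μ B) ≤ (μ A - μ B) + μ B := by
            exact add_le_add_right h1 _
        _ = μ A := tsub_add_cancel_of_le hBlt.le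

lemma aux_small
    (hna : ∀ A : Set Ω, MeasurableSet A → 0 < μ A →
      ∃ B ⊆ A, MeasurableSet B ∧ 0 < μ B ∧ μ B < μ A)
    (A : Set Ω) (hA : MeasurableSet A) (h0 : 0 < μ A) {ε : ℝ≥0∞} (hε : 0 < ε) :
    ∃ B ⊆ A, MeasurableSet B ∧ 0 < μ B ∧ μ B < ε := by
  have key : ∀ n : ℕ, ∃ B ⊆ A, MeasurableSet B ∧ 0 < μ B ∧ μ B * 2 ^ n ≤ μ A := by
    intro n
    induction n with
    | zero => exact ⟨A, subset_rfl, hA, h0, by simp⟩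
    | succ n ih =>
      obtain ⟨B, hBA, hBm, hB0, hBle⟩ := ih
      obtain ⟨C, hCB, hCm, hC0, hC2⟩ := aux_half μ hna B hBm hB0
      refine ⟨C, hCB.trans hBA, hCm, hC0, ?_⟩
      calc μ C * 2 ^ (n + 1) = (2 * μ C) * 2 ^ n := by ring
        _ ≤ μ B * 2 ^ n := mul_le_mul_left hC2 _
        _ ≤ μ A := hBle
  rcases eq_or_ne ε ∞ with rfl | hεtop
  · exact ⟨A, subset_rfl, hA, h0, (measure_lt_top μ A)⟩
  · obtain ⟨m, hm⟩ := ENNReal.exists_nat_gt (r := μ A / ε)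
      (ENNReal.div_lt_top (measure_ne_top μ A) hε.ne').ne
    obtain ⟨B, hBA, hBm, hB0, hBle⟩ := key m
    refine ⟨B, hBA, hBm, hB0, ?_⟩
    have h1 : μ A < ε * 2 ^ m := by
      have h2 : μ A / ε < 2 ^ m := lt_of_lt_of_le hm (by exact_mod_cast (Nat.lt_two_pow_self (n := m)).le)
      rwa [ENNReal.div_lt_iff (Or.inl hε.ne') (Or.inl hεtop), mul_comm] at h2
    have := lt_of_le_of_lt hBle h1
    rw [mul_comm ε] at this
    exact lt_of_mul_lt_mul_right (by simpa [mul_comm] using this) zero_le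

end Aux





section Aux2
variable {Ω : Type*} [MeasurableSpace Ω] (μ : Measure Ω) [IsFiniteMeasure μ]

lemma aux_step (A : Set Ω) (a : ℝ≥0∞) (ha : a ≠ ∞) (B : Set Ω) :
    ∃ C, C ⊆ A \ B ∧ MeasurableSet C ∧ μ C ≤ a - μ B ∧
      ∀ D, D ⊆ A \ B → MeasurableSet D → μ D ≤ a - μ B → μ D ≤ 2 * μ C := by
  classical
  set S : Set ℝ≥0∞ := {x | ∃ D, D ⊆ A \ B ∧ MeasurableSet D ∧ μ D ≤ a - μ B ∧ μ D = x} with hS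
  set s := sSup S with hs
  have hstop : s ≠ ∞ := by
    have : s ≤ a - μ B := sSup_le (by rintro x ⟨D, -, -, hD, rfl⟩; exact hD)
    exact (this.trans_lt (lt_of_le_of_lt tsub_le_self ha.lt_top)).ne
  rcases eq_or_ne s 0 with hs0 | hs0
  · refine ⟨∅, Set.empty_subset _, MeasurableSet.empty, by simp, ?_⟩
    intro D hD hDm hDle
    have : μ D ≤ s := le_sSup ⟨D, hD, hDm, hDle, rfl⟩
    simpa [hs0] using this.trans (le_of_eq hs0)
  · have hhalf : s / 2 < s := ENNReal.half_lt_self hs0 hstop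
    obtain ⟨x, hxS, hx⟩ := lt_sSup_iff.mp hhalf
    obtain ⟨C, hCA, hCm, hCle, rfl⟩ := hxS
    refine ⟨C, hCA, hCm, hCle, ?_⟩
    intro D hD hDm hDle
    have h1 : μ D ≤ s := le_sSup ⟨D, hD, hDm, hDle, rfl⟩
    have h2 : s ≤ 2 * μ C := by
      have := mul_le_mul_right hx.le 2
      rwa [ENNReal.mul_div_cancel (by norm_num) (by norm_num)] at this
    exact h1.trans h2

lemma aux_sierpinski
    (hna : ∀ A : Set Ω, MeasurableSet A → 0 < μ A →
      ∃ B ⊆ A, MeasurableSet B ∧ 0 < μ B ∧ μ B < μ A)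
    (A : Set Ω) (hA : MeasurableSet A) (a : ℝ≥0∞) (ha : a ≤ μ A) :
    ∃ B ⊆ A, MeasurableSet B ∧ μ B = a := by
  classical
  have hatop : a ≠ ∞ := (ha.trans_lt (measure_lt_top μ A)).ne
  set step : Set Ω → Set Ω := fun B => Classical.choose (aux_step μ A a hatop B) with hstep
  have spec : ∀ B : Set Ω, step B ⊆ A \ B ∧ MeasurableSet (step B) ∧
      μ (step B) ≤ a - μ B ∧
      ∀ D, D ⊆ A \ B → MeasurableSet D → μ D ≤ a - μ B → μ D ≤ 2 * μ (step B) :=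
    fun B => Classical.choose_spec (aux_step μ A a hatop B)
  set f : ℕ → Set Ω := fun n => Nat.rec ∅ (fun _ B => B ∪ step B) n with hf
  have fs : ∀ n, f (n + 1) = f n ∪ step (f n) := fun n => rfl
  have inv : ∀ n, MeasurableSet (f n) ∧ f n ⊆ A ∧ μ (f n) ≤ a := by
    intro n
    induction n with
    | zero => exact ⟨MeasurableSet.empty, Set.empty_subset _, by rw [show f 0 = ∅ from rfl]; simp⟩
    | succ n ih =>
      rw [fs]
      refine ⟨ih.1.union (spec (f n)).2.1,
        Set.union_subset ih.2.1 ((spec (f n)).1.trans Set.diff_subset), ?_⟩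
      calc μ (f n ∪ step (f n)) ≤ μ (f n) + μ (step (f n)) := measure_union_le _ _
        _ ≤ μ (f n) + (a - μ (f n)) := add_le_add_right (spec (f n)).2.2.1 _
        _ = a := add_tsub_cancel_of_le ih.2.2
  have hdisj : ∀ n, Disjoint (f n) (step (f n)) :=
    fun n => (Set.disjoint_sdiff_right.mono_right (spec (f n)).1)
  have hmono : Monotone f := monotone_nat_of_le_succ (fun n => by rw [fs]; exact Set.subset_union_left)
  have hadd : ∀ n, μ (f n) = ∑ i ∈ Finset.range n, μ (step (f i)) := by
    intro n
    induction n with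
    | zero => simp [hf]
    | succ n ih =>
      rw [fs, measure_union (hdisj n) (spec (f n)).2.1, Finset.sum_range_succ, ih]
  set B := ⋃ n, f n with hB
  have hBm : MeasurableSet B := MeasurableSet.iUnion (fun n => (inv n).1)
  have hBA : B ⊆ A := Set.iUnion_subset (fun n => (inv n).2.1)
  have htend : Filter.Tendsto (fun n => μ (f n)) Filter.atTop (nhds (μ B)) :=
    tendsto_measure_iUnion_atTop hmono
  have hBle : μ B ≤ a := le_of_tendsto' htend (fun n => (inv n).2.2)
  refine ⟨B, hBA, hBm, le_antisymm hBle ?_⟩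
  by_contra hlt
  push_neg at hlt
  have hδ : 0 < a - μ B := tsub_pos_of_lt hlt
  have hABpos : 0 < μ (A \ B) := by
    have : a - μ B ≤ μ (A \ B) := by
      rw [measure_diff hBA hBm.nullMeasurableSet (measure_ne_top μ B)]
      exact tsub_le_tsub_right ha _
    exact lt_of_lt_of_le hδ this
  obtain ⟨D, hDAB, hDm, hD0, hDlt⟩ := aux_small μ hna (A \ B) (hA.diff hBm) hABpos hδ
  have hkey : ∀ n, μ D ≤ 2 * μ (step (f n)) := by
    intro n
    refine (spec (f n)).2.2.2 D ?_ hDm ?_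
    · exact hDAB.trans (Set.diff_subset_diff_right (Set.subset_iUnion f n))
    · exact hDlt.le.trans (tsub_le_tsub_left (measure_mono (Set.subset_iUnion f n)) a)
  have htsum : ∑' n, μ (step (f n)) ≠ ∞ := by
    rw [ENNReal.tsum_eq_iSup_nat]
    exact (iSup_le (fun n => (hadd n) ▸ (inv n).2.2)).trans_lt hatop.lt_top |>.ne
  have hzero : Filter.Tendsto (fun n => μ (step (f n))) Filter.atTop (nhds 0) :=
    ENNReal.tendsto_atTop_zero_of_tsum_ne_top htsum
  have hzero2 : Filter.Tendsto (fun n => 2 * μ (step (f n))) Filter.atTop (nhds 0) := by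
    have := ENNReal.Tendsto.const_mul hzero (Or.inr (by norm_num : (2:ℝ≥0∞) ≠ ∞))
    simpa using this
  have : μ D ≤ 0 := ge_of_tendsto' hzero2 hkey
  exact hD0.ne' (le_antisymm this zero_le)

end Aux2


lemma aux_ratio {w x y z : ℝ≥0∞} (hw : w ≠ ∞) (hx : x ≠ ∞) (hy : y ≠ ∞) (hz : z ≠ ∞)
    (hy0 : y ≠ 0) (hz0 : z ≠ 0)
    (h1 : ∀ p q : ℕ, q ≠ 0 → (p : ℝ≥0∞) * z ≤ q * w → (p : ℝ≥0∞) * y ≤ q * x)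
    (h2 : ∀ p q : ℕ, q ≠ 0 → (q : ℝ≥0∞) * w ≤ p * z → (q : ℝ≥0∞) * x ≤ p * y) :
    x * z = y * w := by
  set X := x.toReal; set Y := y.toReal; set W := w.toReal; set Z := z.toReal
  have hY : 0 < Y := ENNReal.toReal_pos hy0 hy
  have hZ : 0 < Z := ENNReal.toReal_pos hz0 hz
  have hX : 0 ≤ X := ENNReal.toReal_nonneg
  have hW : 0 ≤ W := ENNReal.toReal_nonneg
  have cast1 : ∀ (p : ℕ) (a : ℝ≥0∞), ((p : ℝ≥0∞) * a).toReal = p * a.toReal := by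
    intro p a; simp [ENNReal.toReal_mul]
  have le_iff : ∀ {a b : ℝ≥0∞}, a ≠ ∞ → b ≠ ∞ → (a.toReal ≤ b.toReal ↔ a ≤ b) :=
    fun ha hb => ENNReal.toReal_le_toReal ha hb
  have mul_ne : ∀ (p : ℕ) (a : ℝ≥0∞), a ≠ ∞ → (p : ℝ≥0∞) * a ≠ ∞ :=
    fun p a hA => ENNReal.mul_ne_top (ENNReal.natCast_ne_top p) hA
  have main : X * Z = Y * W := by
    rcases lt_trichotomy (X * Z) (Y * W) with hlt | heq | hgt
    · exfalso
      have hdiv : X / Y < W / Z := by rw [div_lt_div_iff₀ hY hZ]; linarith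
      obtain ⟨r, hr1, hr2⟩ := exists_rat_btwn hdiv
      have hr0 : 0 < (r : ℝ) := lt_of_le_of_lt (div_nonneg hX hY.le) hr1
      set p := r.num.toNat with hp
      set q := r.den with hq
      have hq0 : q ≠ 0 := r.den_nz
      have hpq : (r : ℝ) = (p : ℝ) / q := by
        rw [Rat.cast_def]
        congr 1
        rw [hp]
        exact_mod_cast (Int.toNat_of_nonneg (Rat.num_pos.mpr (by exact_mod_cast hr0)).le).symm
      have hstep : (p : ℝ≥0∞) * z ≤ (q : ℝ≥0∞) * w := by
        rw [← le_iff (mul_ne p z hz) (mul_ne q w hw), cast1, cast1]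
        have : (p : ℝ) / q < W / Z := hpq ▸ hr2
        rw [div_lt_div_iff₀ (by positivity) hZ] at this
        nlinarith
      have := h1 p q hq0 hstep
      rw [← le_iff (mul_ne p y hy) (mul_ne q x hx), cast1, cast1] at this
      have hcon : (r : ℝ) ≤ X / Y := by
        rw [hpq, div_le_div_iff₀ (by positivity) hY]
        nlinarith
      linarith
    · exact heq
    · exfalso
      have hdiv : W / Z < X / Y := by rw [div_lt_div_iff₀ hZ hY]; linarith
      obtain ⟨r, hr1, hr2⟩ := exists_rat_btwn hdiv
      have hr0 : 0 < (r : ℝ) := lt_of_le_of_lt (div_nonneg hW hZ.le) hr1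
      set p := r.num.toNat with hp
      set q := r.den with hq
      have hq0 : q ≠ 0 := r.den_nz
      have hpq : (r : ℝ) = (p : ℝ) / q := by
        rw [Rat.cast_def]
        congr 1
        rw [hp]
        exact_mod_cast (Int.toNat_of_nonneg (Rat.num_pos.mpr (by exact_mod_cast hr0)).le).symm
      have hstep : (q : ℝ≥0∞) * w ≤ (p : ℝ≥0∞) * z := by
        rw [← le_iff (mul_ne q w hw) (mul_ne p z hz), cast1, cast1]
        have : W / Z < (p : ℝ) / q := hpq ▸ hr1
        rw [div_lt_div_iff₀ hZ (by positivity)] at this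
        nlinarith
      have := h2 p q hq0 hstep
      rw [← le_iff (mul_ne q x hx) (mul_ne p y hy), cast1, cast1] at this
      have hcon : X / Y ≤ (r : ℝ) := by
        rw [hpq, div_le_div_iff₀ hY (by positivity)]
        nlinarith
      linarith
  rw [← ENNReal.toReal_eq_toReal_iff' (ENNReal.mul_ne_top hx hz) (ENNReal.mul_ne_top hy hw),
    ENNReal.toReal_mul, ENNReal.toReal_mul]
  exact main


section Main
variable {Ω : Type*} [MeasurableSpace Ω] (μ ν : Measure Ω) [IsFiniteMeasure μ] [IsFiniteMeasure ν]
  (hna : ∀ A : Set Ω, MeasurableSet A → 0 < μ A →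
      ∃ B ⊆ A, MeasurableSet B ∧ 0 < μ B ∧ μ B < μ A)
  (h : ∀ A A' : Set Ω, MeasurableSet A → MeasurableSet A' → μ A = μ A' → ν A = ν A')

include hna h

lemma aux_mono (A A' : Set Ω) (hA : MeasurableSet A) (hA' : MeasurableSet A')
    (hle : μ A ≤ μ A') : ν A ≤ ν A' := by
  obtain ⟨C, hCA, hCm, hCμ⟩ := aux_sierpinski μ hna A' hA' (μ A) hle
  rw [h A C hA hCm hCμ.symm]
  exact measure_mono hCA

lemma aux_scale (n : ℕ) (U B : Set Ω) (hU : MeasurableSet U) (hB : MeasurableSet B)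
    (hμ : μ B = n * μ U) : ν B = n * ν U := by
  induction n generalizing B with
  | zero =>
    simp only [Nat.cast_zero, zero_mul] at hμ ⊢
    rw [h B ∅ hB MeasurableSet.empty (by simp [hμ]), measure_empty]
  | succ n ih =>
    have hle : (n : ℝ≥0∞) * μ U ≤ μ B := by
      rw [hμ, Nat.cast_succ]
      exact mul_le_mul_left (by simp) _
    obtain ⟨C, hCB, hCm, hCμ⟩ := aux_sierpinski μ hna B hB _ hle
    have hfin : (n : ℝ≥0∞) * μ U ≠ ∞ := ENNReal.mul_ne_top (ENNReal.natCast_ne_top n) (measure_ne_top μ U)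
    have hdiff : μ (B \ C) = μ U := by
      rw [measure_diff hCB hCm.nullMeasurableSet (measure_ne_top μ C), hμ, hCμ, Nat.cast_succ,
        add_mul, one_mul, add_comm, ENNReal.add_sub_cancel_right hfin]
    have hν1 : ν (B \ C) = ν U := h _ _ (hB.diff hCm) hU hdiff
    have hν2 : ν C = n * ν U := ih C hCm hCμ
    have hsplit : ν B = ν C + ν (B \ C) := by
      rw [← measure_union Set.disjoint_sdiff_right (hB.diff hCm), Set.union_diff_cancel hCB]
    rw [hsplit, hν1, hν2, Nat.cast_succ, add_mul, one_mul]

lemma aux_lower (p : ℕ) (U A : Set Ω) (hU : MeasurableSet U) (hA : MeasurableSet A)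
    (hle : (p : ℝ≥0∞) * μ U ≤ μ A) : (p : ℝ≥0∞) * ν U ≤ ν A := by
  obtain ⟨C, hCA, hCm, hCμ⟩ := aux_sierpinski μ hna A hA _ hle
  rw [← aux_scale μ ν hna h p U C hU hCm hCμ]
  exact measure_mono hCA

lemma aux_upper (p : ℕ) (U A : Set Ω) (hU : MeasurableSet U) (hA : MeasurableSet A)
    (hle : μ A ≤ (p : ℝ≥0∞) * μ U) : ν A ≤ (p : ℝ≥0∞) * ν U := by
  induction p generalizing A with
  | zero =>
    simp only [Nat.cast_zero, zero_mul, le_zero_iff] at hle ⊢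
    rw [h A ∅ hA MeasurableSet.empty (by simp [hle]), measure_empty]
  | succ p ih =>
    rcases le_total (μ A) ((p : ℝ≥0∞) * μ U) with hc | hc
    · exact (ih A hA hc).trans (mul_le_mul_left (by exact_mod_cast Nat.le_succ p) _)
    · obtain ⟨C, hCA, hCm, hCμ⟩ := aux_sierpinski μ hna A hA _ hc
      have hν2 : ν C = p * ν U := aux_scale μ ν hna h p U C hU hCm hCμ
      have hfin : (p : ℝ≥0∞) * μ U ≠ ∞ :=
        ENNReal.mul_ne_top (ENNReal.natCast_ne_top p) (measure_ne_top μ U)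
      have hdle : μ (A \ C) ≤ μ U := by
        rw [measure_diff hCA hCm.nullMeasurableSet (measure_ne_top μ C), hCμ]
        calc μ A - p * μ U ≤ (p + 1 : ℕ) * μ U - p * μ U := tsub_le_tsub_right hle _
          _ = μ U := by
              rw [Nat.cast_succ, add_mul, one_mul, add_comm, ENNReal.add_sub_cancel_right hfin]
      have hν1 : ν (A \ C) ≤ ν U := aux_mono μ ν hna h _ _ (hA.diff hCm) hU hdle
      have hsplit : ν A = ν C + ν (A \ C) := by
        rw [← measure_union Set.disjoint_sdiff_right (hA.diff hCm), Set.union_diff_cancel hCA]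
      rw [hsplit, hν2, Nat.cast_succ, add_mul, one_mul]
      exact add_le_add_right hν1 _

end Main

/-- If `μ, ν` are finite nonatomic measures and `ν(A) = ν(A')`
whenever `μ(A) = μ(A')`, then `ν = c·μ` for some constant `c`. -/
theorem stmt10 {Ω : Type*} [MeasurableSpace Ω] (μ ν : Measure Ω)
    [IsFiniteMeasure μ] [IsFiniteMeasure ν]
    (hμna : ∀ A : Set Ω, MeasurableSet A → 0 < μ A →
      ∃ B ⊆ A, MeasurableSet B ∧ 0 < μ B ∧ μ B < μ A)
    (hνna : ∀ A : Set Ω, MeasurableSet A → 0 < ν A →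
      ∃ B ⊆ A, MeasurableSet B ∧ 0 < ν B ∧ ν B < ν A)
    (h : ∀ A A' : Set Ω, MeasurableSet A → MeasurableSet A' →
      μ A = μ A' → ν A = ν A') :
    ∃ c : NNReal, ∀ A : Set Ω, MeasurableSet A → ν A = c * μ A := by
  by_cases hμΩ : μ Set.univ = 0
  · refine ⟨0, fun A hA => ?_⟩
    have hA0 : μ A = 0 := le_antisymm ((measure_mono (Set.subset_univ A)).trans hμΩ.le) zero_le
    rw [h A ∅ hA MeasurableSet.empty (by simp [hA0]), measure_empty]
    simp
  by_cases hνΩ : ν Set.univ = 0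
  · refine ⟨0, fun A hA => ?_⟩
    have : ν A = 0 := le_antisymm ((measure_mono (Set.subset_univ A)).trans hνΩ.le) zero_le
    simp [this]
  -- main case
  have key : ∀ (q : ℕ), q ≠ 0 → ∃ U : Set Ω, MeasurableSet U ∧
      μ Set.univ = q * μ U ∧ ν Set.univ = q * ν U := by
    intro q hq
    obtain ⟨U, _, hUm, hUμ⟩ := aux_sierpinski μ hμna Set.univ MeasurableSet.univ
      (μ Set.univ / q) (ENNReal.div_le_of_le_mul (le_mul_of_one_le_right' (by exact_mod_cast Nat.one_le_iff_ne_zero.mpr hq)))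
    have hμU : μ Set.univ = q * μ U := by
      rw [hUμ, ENNReal.mul_div_cancel (by exact_mod_cast hq) (ENNReal.natCast_ne_top q)]
    exact ⟨U, hUm, hμU, aux_scale μ ν hμna h q U Set.univ hUm MeasurableSet.univ hμU⟩
  have hmain : ∀ A : Set Ω, MeasurableSet A → ν A * μ Set.univ = ν Set.univ * μ A := by
    intro A hA
    refine aux_ratio (measure_ne_top μ A) (measure_ne_top ν A) (measure_ne_top ν Set.univ)
      (measure_ne_top μ Set.univ) hνΩ hμΩ ?_ ?_
    · -- p * μΩ ≤ q * μ A → p * νΩ ≤ q * ν A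
      intro p q hq hle
      obtain ⟨U, hUm, hμU, hνU⟩ := key q hq
      have hq0 : (q : ℝ≥0∞) ≠ 0 := by exact_mod_cast hq
      have h1 : (p : ℝ≥0∞) * μ U ≤ μ A := by
        rw [← ENNReal.mul_le_mul_iff_right hq0 (ENNReal.natCast_ne_top q)]
        calc (q : ℝ≥0∞) * ((p : ℝ≥0∞) * μ U) = (p : ℝ≥0∞) * ((q : ℝ≥0∞) * μ U) := by ring
          _ = (p : ℝ≥0∞) * μ Set.univ := by rw [hμU]
          _ ≤ q * μ A := hle
      have h2 := aux_lower μ ν hμna h p U A hUm hA h1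
      calc (p : ℝ≥0∞) * ν Set.univ = (q : ℝ≥0∞) * ((p : ℝ≥0∞) * ν U) := by rw [hνU]; ring
        _ ≤ (q : ℝ≥0∞) * ν A := mul_le_mul_right h2 _
    · -- q * μ A ≤ p * μΩ → q * ν A ≤ p * νΩ
      intro p q hq hle
      obtain ⟨U, hUm, hμU, hνU⟩ := key q hq
      have hq0 : (q : ℝ≥0∞) ≠ 0 := by exact_mod_cast hq
      have h1 : μ A ≤ (p : ℝ≥0∞) * μ U := by
        rw [← ENNReal.mul_le_mul_iff_right hq0 (ENNReal.natCast_ne_top q)]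
        calc (q : ℝ≥0∞) * μ A ≤ (p : ℝ≥0∞) * μ Set.univ := hle
          _ = (q : ℝ≥0∞) * ((p : ℝ≥0∞) * μ U) := by rw [hμU]; ring
      have h2 := aux_upper μ ν hμna h p U A hUm hA h1
      calc (q : ℝ≥0∞) * ν A ≤ (q : ℝ≥0∞) * ((p : ℝ≥0∞) * ν U) := mul_le_mul_right h2 _
        _ = (p : ℝ≥0∞) * ν Set.univ := by rw [hνU]; ring
  refine ⟨(ν Set.univ / μ Set.univ).toNNReal, fun A hA => ?_⟩
  have hfin : ν Set.univ / μ Set.univ ≠ ∞ :=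
    (ENNReal.div_lt_top (measure_ne_top ν Set.univ) hμΩ).ne
  rw [ENNReal.coe_toNNReal hfin]
  have harr : ν Set.univ / μ Set.univ * μ A = ν Set.univ * μ A / μ Set.univ := by
    rw [div_eq_mul_inv, div_eq_mul_inv]; ring
  rw [harr, ← hmain A hA, mul_comm, mul_div_assoc, ENNReal.mul_div_cancel hμΩ (measure_ne_top μ _)]
end

section
/- Let (Ω, Σ) be a measurable space and μ, ν two σ-finite nonatomic measures on it such that ν(A) = ν(A′) whenever μ(A) = μ(A′). Then there exists c ∈ ℝ≥0 such that ν = c·μ. -/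
open MeasureTheory

open MeasureTheory ENNReal Set

section StmtAux
variable {Ω : Type*} [MeasurableSpace Ω]

lemma stmt11_half (μ : Measure Ω)
    (hna : ∀ A : Set Ω, MeasurableSet A → 0 < μ A →
      ∃ B ⊆ A, MeasurableSet B ∧ 0 < μ B ∧ μ B < μ A)
    {A : Set Ω} (hA : MeasurableSet A) (h0 : 0 < μ A) (hfin : μ A ≠ ∞) :
    ∃ B ⊆ A, MeasurableSet B ∧ 0 < μ B ∧ μ B ≤ μ A / 2 := by
  obtain ⟨B, hBA, hBm, hB0, hBlt⟩ := hna A hA h0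
  rcases le_or_gt (μ B) (μ A / 2) with hle | hgt
  · exact ⟨B, hBA, hBm, hB0, hle⟩
  · refine ⟨A \ B, Set.diff_subset, hA.diff hBm, ?_, ?_⟩
    · rw [measure_diff hBA hBm.nullMeasurableSet (ne_top_of_lt hBlt)]
      exact tsub_pos_of_lt hBlt
    · rw [measure_diff hBA hBm.nullMeasurableSet (ne_top_of_lt hBlt)]
      calc μ A - μ B ≤ μ A - μ A / 2 := tsub_le_tsub_left hgt.le _
        _ = μ A / 2 := ENNReal.sub_half hfin

lemma stmt11_small (μ : Measure Ω)
    (hna : ∀ A : Set Ω, MeasurableSet A → 0 < μ A →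
      ∃ B ⊆ A, MeasurableSet B ∧ 0 < μ B ∧ μ B < μ A)
    {A : Set Ω} (hA : MeasurableSet A) (h0 : 0 < μ A) (hfin : μ A ≠ ∞)
    {ε : ℝ≥0∞} (hε : 0 < ε) :
    ∃ B ⊆ A, MeasurableSet B ∧ 0 < μ B ∧ μ B ≤ ε := by
  have key : ∀ n : ℕ, ∃ B ⊆ A, MeasurableSet B ∧ 0 < μ B ∧ μ B ≤ μ A * 2⁻¹ ^ n := by
    intro n
    induction n with
    | zero => exact ⟨A, subset_rfl, hA, h0, by simp⟩
    | succ n ih =>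
      obtain ⟨B, hBA, hBm, hB0, hBle⟩ := ih
      have hBfin : μ B ≠ ∞ := ne_top_of_le_ne_top
        (ENNReal.mul_ne_top hfin (by simp [ENNReal.pow_ne_top])) hBle
      obtain ⟨C, hCB, hCm, hC0, hCle⟩ := stmt11_half μ hna hBm hB0 hBfin
      refine ⟨C, hCB.trans hBA, hCm, hC0, ?_⟩
      calc μ C ≤ μ B / 2 := hCle
        _ = μ B * 2⁻¹ := by rw [div_eq_mul_inv]
        _ ≤ μ A * 2⁻¹ ^ n * 2⁻¹ := mul_le_mul_left hBle _
        _ = μ A * 2⁻¹ ^ (n + 1) := by rw [pow_succ, mul_assoc]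
  obtain ⟨n, hn⟩ := ENNReal.exists_inv_two_pow_lt (a := ε / μ A)
    (by simp [ENNReal.div_eq_zero_iff, hε.ne', hfin])
  obtain ⟨B, hBA, hBm, hB0, hBle⟩ := key n
  refine ⟨B, hBA, hBm, hB0, hBle.trans ?_⟩
  calc μ A * 2⁻¹ ^ n ≤ μ A * (ε / μ A) := mul_le_mul_right hn.le _
    _ = ε := ENNReal.mul_div_cancel h0.ne' hfin

lemma stmt11_sierpinski (μ : Measure Ω)
    (hna : ∀ A : Set Ω, MeasurableSet A → 0 < μ A →
      ∃ B ⊆ A, MeasurableSet B ∧ 0 < μ B ∧ μ B < μ A)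
    {A : Set Ω} (hA : MeasurableSet A) (hfin : μ A ≠ ∞) {r : ℝ≥0∞} (hr : r ≤ μ A) :
    ∃ B ⊆ A, MeasurableSet B ∧ μ B = r := by
  classical
  have hrfin : r ≠ ∞ := ne_top_of_le_ne_top hfin hr
  have key : ∀ C : Set Ω, C ⊆ A → MeasurableSet C → μ C ≤ r →
      ∃ D, (D ⊆ A \ C ∧ MeasurableSet D ∧ μ D ≤ r - μ C) ∧
        ∀ E, E ⊆ A \ C → MeasurableSet E → μ E ≤ r - μ C → μ E ≤ 2 * μ D := by
    intro C hCA hCm hCr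
    set S : Set ℝ≥0∞ := μ '' {E | E ⊆ A \ C ∧ MeasurableSet E ∧ μ E ≤ r - μ C} with hS
    have hsup_le : sSup S ≤ r - μ C := by
      refine sSup_le ?_; rintro x ⟨E, hE, rfl⟩; exact hE.2.2
    rcases eq_or_ne (sSup S) 0 with h0 | h0
    · refine ⟨∅, ⟨empty_subset _, MeasurableSet.empty, by simp⟩, ?_⟩
      intro E hE hEm hEr
      have hmem : μ E ∈ S := ⟨E, ⟨hE, hEm, hEr⟩, rfl⟩
      have h' : μ E ≤ 0 := (le_sSup hmem).trans_eq h0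
      simpa using h'
    · have hsfin : sSup S ≠ ∞ :=
        ne_top_of_le_ne_top (ne_top_of_le_ne_top hrfin tsub_le_self) hsup_le
      have hlt : sSup S / 2 < sSup S := ENNReal.half_lt_self h0 hsfin
      obtain ⟨x, hxS, hx⟩ := lt_sSup_iff.mp hlt
      obtain ⟨D, hD, rfl⟩ := hxS
      refine ⟨D, hD, ?_⟩
      intro E hE hEm hEr
      calc μ E ≤ sSup S := le_sSup ⟨E, ⟨hE, hEm, hEr⟩, rfl⟩
        _ = 2 * (sSup S / 2) := (ENNReal.mul_div_cancel two_ne_zero ENNReal.ofNat_ne_top).symm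
        _ ≤ 2 * μ D := mul_le_mul_right hx.le _
  have stepex : ∀ p : {C : Set Ω // C ⊆ A ∧ MeasurableSet C ∧ μ C ≤ r},
      ∃ q : {C : Set Ω // C ⊆ A ∧ MeasurableSet C ∧ μ C ≤ r}, ∃ D : Set Ω,
        (q : Set Ω) = ↑p ∪ D ∧ D ⊆ A \ ↑p ∧ MeasurableSet D ∧
        (∀ E, E ⊆ A \ ↑p → MeasurableSet E → μ E ≤ r - μ ↑p → μ E ≤ 2 * μ D) := by
    rintro ⟨C, hCA, hCm, hCr⟩
    obtain ⟨D, ⟨hD1, hD2, hD3⟩, hmax⟩ := key C hCA hCm hCr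
    refine ⟨⟨C ∪ D, union_subset hCA (hD1.trans diff_subset), hCm.union hD2, ?_⟩,
      D, rfl, hD1, hD2, hmax⟩
    calc μ (C ∪ D) ≤ μ C + μ D := measure_union_le _ _
      _ ≤ μ C + (r - μ C) := add_le_add_right hD3 _
      _ = r := add_tsub_cancel_of_le hCr
  choose f Df hDf1 hDf2 hDf3 hDf4 using stepex
  let seq : ℕ → {C : Set Ω // C ⊆ A ∧ MeasurableSet C ∧ μ C ≤ r} := fun n =>
    Nat.rec ⟨∅, empty_subset _, MeasurableSet.empty, by simp⟩ (fun _ p => f p) n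
  have hseq : ∀ n, seq (n + 1) = f (seq n) := fun n => rfl
  set B : ℕ → Set Ω := fun n => (seq n).1 with hB
  set D : ℕ → Set Ω := fun n => Df (seq n) with hDdef
  have hBD : ∀ n, B (n + 1) = B n ∪ D n := fun n => hDf1 (seq n)
  have hDsub : ∀ n, D n ⊆ A \ B n := fun n => hDf2 (seq n)
  have hDm : ∀ n, MeasurableSet (D n) := fun n => hDf3 (seq n)
  have hmax : ∀ n E, E ⊆ A \ B n → MeasurableSet E → μ E ≤ r - μ (B n) →
      μ E ≤ 2 * μ (D n) := fun n => hDf4 (seq n)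
  have inv : ∀ n, B n ⊆ A ∧ MeasurableSet (B n) ∧ μ (B n) ≤ r := fun n => (seq n).2
  have hadd : ∀ n, μ (B (n + 1)) = μ (B n) + μ (D n) := by
    intro n
    rw [hBD n]
    exact measure_union (disjoint_of_subset_right (hDsub n) disjoint_sdiff_right) (hDm n)
  have hmono : Monotone B := monotone_nat_of_le_succ fun n => by
    rw [hBD n]; exact subset_union_left
  set L : Set Ω := ⋃ n, B n with hL
  have hLA : L ⊆ A := iUnion_subset fun n => (inv n).1
  have hLm : MeasurableSet L := MeasurableSet.iUnion fun n => (inv n).2.1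
  have hμL : μ L = ⨆ n, μ (B n) := hmono.directed_le.measure_iUnion
  have hLr : μ L ≤ r := by rw [hμL]; exact iSup_le fun n => (inv n).2.2
  refine ⟨L, hLA, hLm, le_antisymm hLr ?_⟩
  by_contra hcon
  have hlt : μ L < r := lt_of_le_of_ne hLr fun e => hcon (e ▸ le_rfl)
  have hLfin : μ L ≠ ∞ := ne_top_of_le_ne_top hrfin hLr
  have hALpos : 0 < μ (A \ L) := by
    rw [measure_diff hLA hLm.nullMeasurableSet hLfin]
    exact tsub_pos_of_lt (hlt.trans_le hr)
  obtain ⟨E, hEAL, hEm, hE0, hEle⟩ := stmt11_small μ hna (hA.diff hLm) hALpos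
    (ne_top_of_le_ne_top hfin (measure_mono diff_subset)) (tsub_pos_of_lt hlt)
  set e : ℝ≥0∞ := μ E / 2 with he
  have he0 : e ≠ 0 := (ENNReal.half_pos hE0.ne').ne'
  have hefin : e ≠ ∞ :=
    (ENNReal.div_lt_top
      (ne_top_of_le_ne_top (ne_top_of_le_ne_top hrfin tsub_le_self) hEle) two_ne_zero).ne
  have heD : ∀ n, e ≤ μ (D n) := by
    intro n
    have hsub : E ⊆ A \ B n := hEAL.trans (diff_subset_diff_right (subset_iUnion B n))
    have hEr : μ E ≤ r - μ (B n) :=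
      hEle.trans (tsub_le_tsub_left (measure_mono (subset_iUnion B n)) r)
    have h2D := hmax n E hsub hEm hEr
    rw [he, ENNReal.div_le_iff_le_mul (Or.inl two_ne_zero) (Or.inl ENNReal.ofNat_ne_top)]
    rwa [mul_comm] at h2D
  have grow : ∀ n : ℕ, (n : ℝ≥0∞) * e ≤ μ (B n) := by
    intro n; induction n with
    | zero => simp
    | succ n ih =>
      rw [hadd n, Nat.cast_succ, add_mul, one_mul]
      exact add_le_add ih (heD n)
  obtain ⟨n, hn⟩ := ENNReal.exists_nat_gt (ENNReal.div_lt_top hrfin he0).ne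
  have h1 : r ≤ (n : ℝ≥0∞) * e := by
    calc r = r / e * e := (ENNReal.div_mul_cancel he0 hefin).symm
      _ ≤ (n : ℝ≥0∞) * e := mul_le_mul_left hn.le _
  have h2 : r < ((n + 1 : ℕ) : ℝ≥0∞) * e := by
    rw [Nat.cast_succ, add_mul, one_mul]
    calc r ≤ (n : ℝ≥0∞) * e := h1
      _ < (n : ℝ≥0∞) * e + e :=
        ENNReal.lt_add_right (ENNReal.mul_ne_top (natCast_ne_top n) hefin) he0
  exact absurd ((h2.trans_le (grow (n + 1))).trans_le (inv (n + 1)).2.2) (lt_irrefl r)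

variable (μ ν : Measure Ω)
  (hμna : ∀ A : Set Ω, MeasurableSet A → 0 < μ A →
      ∃ B ⊆ A, MeasurableSet B ∧ 0 < μ B ∧ μ B < μ A)
  (h : ∀ A A' : Set Ω, MeasurableSet A → MeasurableSet A' →
      μ A = μ A' → ν A = ν A')

include hμna h

lemma stmt11_mono {A C : Set Ω} (hA : MeasurableSet A) (hC : MeasurableSet C)
    (hCfin : μ C ≠ ∞) (hle : μ A ≤ μ C) : ν A ≤ ν C := by
  obtain ⟨B, hBC, hBm, hBμ⟩ := stmt11_sierpinski μ hμna hC hCfin hle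
  rw [h A B hA hBm hBμ.symm]
  exact measure_mono hBC

lemma stmt11_split (q : ℕ) {A : Set Ω} (hA : MeasurableSet A) (hfin : μ A ≠ ∞) :
    ∃ B ⊆ A, MeasurableSet B ∧ μ B = μ A / ((q : ℝ≥0∞) + 1) ∧
      ν A = ((q : ℝ≥0∞) + 1) * ν B := by
  induction q generalizing A with
  | zero => exact ⟨A, subset_rfl, hA, by simp, by simp⟩
  | succ q ih =>
    have hq2 : ((q : ℝ≥0∞) + 1 + 1) ≠ 0 := by simp
    have hq2' : ((q : ℝ≥0∞) + 1 + 1) ≠ ∞ := by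
      simp [ENNReal.add_ne_top, natCast_ne_top]
    have hq1 : ((q : ℝ≥0∞) + 1) ≠ 0 := by simp
    have hq1' : ((q : ℝ≥0∞) + 1) ≠ ∞ := by simp [ENNReal.add_ne_top, natCast_ne_top]
    set d : ℝ≥0∞ := μ A / ((q : ℝ≥0∞) + 1 + 1) with hd
    have hdfin : d ≠ ∞ := (ENNReal.div_lt_top hfin hq2).ne
    have hdle : d ≤ μ A := by
      rw [hd, ENNReal.div_le_iff_le_mul (Or.inl hq2) (Or.inl hq2')]
      exact le_mul_of_one_le_right zero_le
        (by calc (1 : ℝ≥0∞) ≤ 1 + 1 := le_add_self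
              _ ≤ (q : ℝ≥0∞) + 1 + 1 := by gcongr; exact le_add_self)
    obtain ⟨B, hBA, hBm, hBμ⟩ := stmt11_sierpinski μ hμna hA hfin hdle
    have hAeq : μ A = ((q : ℝ≥0∞) + 1 + 1) * d := (ENNReal.mul_div_cancel hq2 hq2').symm
    have hA'μ : μ (A \ B) = ((q : ℝ≥0∞) + 1) * d := by
      rw [measure_diff hBA hBm.nullMeasurableSet (hBμ ▸ hdfin), hBμ]
      exact ENNReal.sub_eq_of_eq_add hdfin (by rw [hAeq]; ring)
    have hA'fin : μ (A \ B) ≠ ∞ :=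
      ne_top_of_le_ne_top hfin (measure_mono diff_subset)
    obtain ⟨B', hB'A', hB'm, hB'μ, hνA'⟩ := ih (hA.diff hBm) hA'fin
    have hB'd : μ B' = d := by
      rw [hB'μ, hA'μ, mul_comm, mul_div_assoc, ENNReal.div_self hq1 hq1', mul_one]
    have hνBB' : ν B' = ν B := h B' B hB'm hBm (by rw [hB'd, hBμ])
    have hνadd : ν A = ν B + ν (A \ B) := by
      conv_lhs => rw [← union_diff_cancel hBA]
      exact measure_union disjoint_sdiff_right (hA.diff hBm)
    refine ⟨B, hBA, hBm, by push_cast; exact hBμ, ?_⟩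
    rw [hνadd, hνA', hνBB']
    push_cast
    ring

lemma stmt11_comp {A S : Set Ω} (hA : MeasurableSet A) (hS : MeasurableSet S)
    (hAfin : μ A ≠ ∞) (hSfin : μ S ≠ ∞) (p q : ℕ) (hp : 0 < p) (hq : 0 < q)
    (hle : (p : ℝ≥0∞) * μ A ≤ (q : ℝ≥0∞) * μ S) :
    (p : ℝ≥0∞) * ν A ≤ (q : ℝ≥0∞) * ν S := by
  obtain ⟨p, rfl⟩ := Nat.exists_eq_succ_of_ne_zero hp.ne'
  obtain ⟨q, rfl⟩ := Nat.exists_eq_succ_of_ne_zero hq.ne'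
  push_cast at hle ⊢
  have hq1 : ((q : ℝ≥0∞) + 1) ≠ 0 := by simp
  have hq1' : ((q : ℝ≥0∞) + 1) ≠ ∞ := by simp [ENNReal.add_ne_top, natCast_ne_top]
  have hp1 : ((p : ℝ≥0∞) + 1) ≠ 0 := by simp
  have hp1' : ((p : ℝ≥0∞) + 1) ≠ ∞ := by simp [ENNReal.add_ne_top, natCast_ne_top]
  obtain ⟨B, hBA, hBm, hBμ, hνA⟩ := stmt11_split μ ν hμna h q hA hAfin
  obtain ⟨C, hCS, hCm, hCμ, hνS⟩ := stmt11_split μ ν hμna h p hS hSfin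
  have hμBC : μ B ≤ μ C := by
    rw [hBμ, hCμ, ENNReal.div_le_iff_le_mul (Or.inl hq1) (Or.inl hq1'),
      div_eq_mul_inv, mul_right_comm, ← div_eq_mul_inv,
      ENNReal.le_div_iff_mul_le (Or.inl hp1) (Or.inl hp1')]
    calc μ A * ((p : ℝ≥0∞) + 1) = ((p : ℝ≥0∞) + 1) * μ A := mul_comm _ _
      _ ≤ ((q : ℝ≥0∞) + 1) * μ S := hle
      _ = μ S * ((q : ℝ≥0∞) + 1) := mul_comm _ _
  have hνBC : ν B ≤ ν C :=
    stmt11_mono μ ν hμna h hBm hCm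
      (by rw [hCμ]; exact (ENNReal.div_lt_top hSfin hp1).ne) hμBC
  rw [hνA, hνS, ← mul_assoc, ← mul_assoc, mul_comm ((p : ℝ≥0∞) + 1) ((q : ℝ≥0∞) + 1)]
  exact mul_le_mul_right hνBC _


end StmtAux

lemma stmt11_aux {a s x y : ℝ≥0∞} (ha : a ≠ ∞) (hs0 : s ≠ 0) (hs : s ≠ ∞)
    (hx : x ≠ ∞) (hy : y ≠ ∞)
    (H : ∀ p q : ℕ, 0 < p → 0 < q → (p : ℝ≥0∞) * a ≤ (q : ℝ≥0∞) * s →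
      (p : ℝ≥0∞) * x ≤ (q : ℝ≥0∞) * y) :
    x * s ≤ y * a := by
  by_contra hcon
  push_neg at hcon
  set A := a.toReal with hA'
  set S := s.toReal with hS'
  set X := x.toReal with hX'
  set Y := y.toReal with hY'
  have hS : 0 < S := ENNReal.toReal_pos hs0 hs
  have hA : 0 ≤ A := ENNReal.toReal_nonneg
  have hY : 0 ≤ Y := ENNReal.toReal_nonneg
  have hreal : Y * A < X * S := by
    have := (ENNReal.toReal_lt_toReal (ENNReal.mul_ne_top hy ha)
      (ENNReal.mul_ne_top hx hs)).mpr hcon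
    rwa [ENNReal.toReal_mul, ENNReal.toReal_mul] at this
  have hX : 0 < X := by
    rcases lt_or_ge 0 X with h | h
    · exact h
    · nlinarith
  have Hreal : ∀ p q : ℕ, 0 < p → 0 < q → (p : ℝ) * A ≤ (q : ℝ) * S →
      (p : ℝ) * X ≤ (q : ℝ) * Y := by
    intro p q hp hq hle
    have h1 : (p : ℝ≥0∞) * a ≤ (q : ℝ≥0∞) * s := by
      rw [← ENNReal.toReal_le_toReal (ENNReal.mul_ne_top (natCast_ne_top p) ha)
        (ENNReal.mul_ne_top (natCast_ne_top q) hs)]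
      simpa [ENNReal.toReal_mul] using hle
    have h2 := (ENNReal.toReal_le_toReal (ENNReal.mul_ne_top (natCast_ne_top p) hx)
      (ENNReal.mul_ne_top (natCast_ne_top q) hy)).mpr (H p q hp hq h1)
    simpa [ENNReal.toReal_mul] using h2
  rcases eq_or_lt_of_le hY with hY0 | hY0
  · obtain ⟨q, hq⟩ := exists_nat_ge (A / S)
    have h1 : ((1 : ℕ) : ℝ) * A ≤ ((q + 1 : ℕ) : ℝ) * S := by
      rw [div_le_iff₀ hS] at hq
      push_cast
      nlinarith
    have := Hreal 1 (q + 1) one_pos (Nat.succ_pos q)  h1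
    push_cast at this
    nlinarith
  · have hdiv : A / S < X / Y := by
      rw [div_lt_div_iff₀ hS hY0]
      nlinarith
    obtain ⟨r, hr1, hr2⟩ := exists_rat_btwn hdiv
    have hrpos : (0 : ℝ) < (r : ℝ) := lt_of_le_of_lt (by positivity) hr1
    have hrpos' : 0 < r := by exact_mod_cast hrpos
    have hnum : 0 < r.num := Rat.num_pos.mpr hrpos'
    have hp : 0 < r.den := r.pos
    have hq : 0 < r.num.toNat := by omega
    have hcast : ((r.num.toNat : ℝ)) / ((r.den : ℕ) : ℝ) = (r : ℝ) := by
      rw [Rat.cast_def]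
      congr 1
      exact_mod_cast Int.toNat_of_nonneg hnum.le
    have hple : ((r.den : ℕ) : ℝ) * A ≤ ((r.num.toNat : ℕ) : ℝ) * S := by
      have h' : A / S < ((r.num.toNat : ℝ)) / ((r.den : ℕ) : ℝ) := by
        rw [hcast]; exact hr1
      rw [div_lt_div_iff₀ hS (by exact_mod_cast hp : (0:ℝ) < (r.den : ℝ))] at h'
      nlinarith
    have hres := Hreal r.den r.num.toNat hp hq hple
    have hfin : X / Y ≤ ((r.num.toNat : ℝ)) / ((r.den : ℕ) : ℝ) := by
      rw [div_le_div_iff₀ hY0 (by exact_mod_cast hp : (0:ℝ) < (r.den : ℝ))]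
      nlinarith
    rw [hcast] at hfin
    linarith

open MeasureTheory

/-- σ-finite version of Statement 10: `ν = c • μ`. -/
theorem stmt11 {Ω : Type*} [MeasurableSpace Ω] (μ ν : Measure Ω)
    [SigmaFinite μ] [SigmaFinite ν]
    (hμna : ∀ A : Set Ω, MeasurableSet A → 0 < μ A →
      ∃ B ⊆ A, MeasurableSet B ∧ 0 < μ B ∧ μ B < μ A)
    (hνna : ∀ A : Set Ω, MeasurableSet A → 0 < ν A →
      ∃ B ⊆ A, MeasurableSet B ∧ 0 < ν B ∧ ν B < ν A)
    (h : ∀ A A' : Set Ω, MeasurableSet A → MeasurableSet A' →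
      μ A = μ A' → ν A = ν A') :
    ∃ c : NNReal, ν = c • μ := by
  classical
  have hnull : ∀ A : Set Ω, MeasurableSet A → μ A = 0 → ν A = 0 := by
    intro A hA h0
    have := h A ∅ hA MeasurableSet.empty (by simp [h0])
    simpa using this
  by_cases hμuniv : μ Set.univ = 0
  · refine ⟨0, ?_⟩
    ext s hs
    have hs0 : μ s = 0 := le_antisymm (hμuniv ▸ measure_mono (Set.subset_univ s)) zero_le
    simp [hnull s hs hs0]
  · set T : ℕ → Set Ω := fun n => spanningSets μ n ∩ spanningSets ν n with hT
    have hTm : ∀ n, MeasurableSet (T n) := fun n =>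
      (measurableSet_spanningSets μ n).inter (measurableSet_spanningSets ν n)
    have hTmono : Monotone T := fun i j hij =>
      Set.inter_subset_inter (monotone_spanningSets μ hij) (monotone_spanningSets ν hij)
    have hTunion : (⋃ n, T n) = Set.univ := by
      rw [hT, Set.iUnion_inter_of_monotone (monotone_spanningSets μ) (monotone_spanningSets ν)]
      simp [iUnion_spanningSets]
    have hTμfin : ∀ n, μ (T n) ≠ ∞ := fun n =>
      ne_top_of_le_ne_top (measure_spanningSets_lt_top μ n).ne
        (measure_mono Set.inter_subset_left)
    have hTνfin : ∀ n, ν (T n) ≠ ∞ := fun n =>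
      ne_top_of_le_ne_top (measure_spanningSets_lt_top ν n).ne
        (measure_mono Set.inter_subset_right)
    obtain ⟨m, hm⟩ : ∃ m, 0 < μ (T m) := by
      by_contra hc
      push_neg at hc
      refine hμuniv ?_
      rw [← hTunion, hTmono.directed_le.measure_iUnion]
      simp only [le_zero_iff] at hc
      simp [hc]
    set c : ℝ≥0∞ := ν (T m) / μ (T m) with hc
    have hcfin : c ≠ ∞ := (ENNReal.div_lt_top (hTνfin m) hm.ne').ne
    have main : ∀ A : Set Ω, MeasurableSet A → μ A ≠ ∞ → ν A = c * μ A := by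
      intro A hA hAfin
      rcases eq_or_ne (μ A) 0 with h0 | h0
      · rw [hnull A hA h0, h0, mul_zero]
      have hνAfin : ν A ≠ ∞ := by
        obtain ⟨k, hk⟩ := ENNReal.exists_nat_gt ((ENNReal.div_lt_top hAfin hm.ne').ne)
        have hkpos : 0 < k := by
          rcases Nat.eq_zero_or_pos k with rfl | hpos
          · exact absurd hk (by simp)
          · exact hpos
        have hkS : ((1 : ℕ) : ℝ≥0∞) * μ A ≤ (k : ℝ≥0∞) * μ (T m) := by
          rw [Nat.cast_one, one_mul]
          calc μ A = μ A / μ (T m) * μ (T m) :=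
                (ENNReal.div_mul_cancel hm.ne' (hTμfin m)).symm
            _ ≤ (k : ℝ≥0∞) * μ (T m) := mul_le_mul_left hk.le _
        have hcomp := stmt11_comp μ ν hμna h hA (hTm m) hAfin (hTμfin m) 1 k one_pos hkpos hkS
        rw [Nat.cast_one, one_mul] at hcomp
        exact ne_top_of_le_ne_top (ENNReal.mul_ne_top (natCast_ne_top k) (hTνfin m)) hcomp
      have h1 : ν A * μ (T m) ≤ ν (T m) * μ A :=
        stmt11_aux hAfin hm.ne' (hTμfin m) hνAfin (hTνfin m)
          (fun p q hp hq hle => stmt11_comp μ ν hμna h hA (hTm m) hAfin (hTμfin m) p q hp hq hle)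
      have h2 : ν (T m) * μ A ≤ ν A * μ (T m) :=
        stmt11_aux (hTμfin m) h0 hAfin (hTνfin m) hνAfin
          (fun p q hp hq hle => stmt11_comp μ ν hμna h (hTm m) hA (hTμfin m) hAfin p q hp hq hle)
      have heq : ν A * μ (T m) = ν (T m) * μ A := le_antisymm h1 h2
      calc ν A = ν A * μ (T m) / μ (T m) := by
            rw [mul_div_assoc, ENNReal.div_self hm.ne' (hTμfin m), mul_one]
        _ = ν (T m) * μ A / μ (T m) := by rw [heq]
        _ = c * μ A := by
            rw [hc, div_eq_mul_inv, div_eq_mul_inv, mul_right_comm]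
    have final : ∀ A : Set Ω, MeasurableSet A → ν A = c * μ A := by
      intro A hA
      have hAun : A = ⋃ n, A ∩ T n := by
        rw [← Set.inter_iUnion, hTunion, Set.inter_univ]
      have hdir : Monotone (fun n => A ∩ T n) := fun i j hij =>
        Set.inter_subset_inter_right _ (hTmono hij)
      calc ν A = ν (⋃ n, A ∩ T n) := by rw [← hAun]
        _ = ⨆ n, ν (A ∩ T n) := hdir.directed_le.measure_iUnion
        _ = ⨆ n, c * μ (A ∩ T n) := by
            refine iSup_congr fun n => ?_
            exact main _ (hA.inter (hTm n))
              (ne_top_of_le_ne_top (hTμfin n) (measure_mono Set.inter_subset_right))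
        _ = c * ⨆ n, μ (A ∩ T n) := by rw [ENNReal.mul_iSup]
        _ = c * μ (⋃ n, A ∩ T n) := by rw [hdir.directed_le.measure_iUnion]
        _ = c * μ A := by rw [← hAun]
    refine ⟨c.toNNReal, ?_⟩
    ext s hs
    rw [ENNReal.smul_def, Measure.smul_apply, smul_eq_mul, ENNReal.coe_toNNReal hcfin]
    exact final s hs
end

section
/- The map V : c₀₊ → ℝ₊ defined on nonnegative sequences x = (xₙ) converging to 0 by V(x) = Σₙ n·xₙⁿ is well-defined (the series converges), satisfies the valuation equation V(x ⊔ y) + V(x ⊓ y) = V(x) + V(y) for all x, y ∈ c₀₊, is continuous with respect to the sup norm, and satisfies V(eₙ) = n for each standard unit vector eₙ. In particular V is a continuous valuation on c₀₊ that is unbounded on the unit ball. -/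
open ZeroAtInfty Filter Topology ZeroAtInftyContinuousMap

private lemma sumMaj : Summable (fun n : ℕ => (n : ℝ) * (1/2) ^ n) := by
  simpa using summable_pow_mul_geometric_of_norm_lt_one (R := ℝ) 1 (r := (1/2 : ℝ)) (by norm_num)

private lemma tendsto_apply_aux (x : C₀(ℕ, ℝ)) : Tendsto (fun n => x n) atTop (nhds 0) := by
  have h := zero_at_infty x
  rwa [cocompact_eq_atTop] at h

private lemma summable_aux (x : ℕ → ℝ) (hx : ∀ n, 0 ≤ x n)
    (hlim : Tendsto x atTop (nhds 0)) :
    Summable (fun n : ℕ => (n : ℝ) * (x n) ^ n) := by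
  refine Summable.of_norm_bounded_eventually sumMaj ?_
  rw [Nat.cofinite_eq_atTop]
  have h2 : ∀ᶠ n in atTop, x n < 1/2 := hlim.eventually_lt_const (by norm_num)
  filter_upwards [h2] with n hn
  rw [Real.norm_eq_abs, abs_of_nonneg (mul_nonneg (Nat.cast_nonneg n) (pow_nonneg (hx n) n))]
  exact mul_le_mul_of_nonneg_left (pow_le_pow_left₀ (hx n) hn.le n) (Nat.cast_nonneg n)

private lemma dist_apply_le (x y : C₀(ℕ, ℝ)) (n : ℕ) : dist (x n) (y n) ≤ dist x y := by
  rw [← dist_toBCF_eq_dist]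
  exact BoundedContinuousFunction.dist_coe_le_dist (f := x.toBCF) (g := y.toBCF) n

private lemma eval_continuous_aux (n : ℕ) : Continuous fun x : C₀(ℕ, ℝ) => x n := by
  apply LipschitzWith.continuous (K := 1)
  intro a b
  rw [edist_dist, edist_dist]
  simpa using ENNReal.ofReal_le_ofReal (dist_apply_le a b n)

set_option maxHeartbeats 1000000 in
/-- `V x = Σₙ n·xₙⁿ` is a well-defined continuous valuation on
the positive cone of `c₀` with `V eₙ = n` (hence unbounded on the unit ball). -/
theorem stmt12 (V : C₀(ℕ, ℝ) → ℝ) (hVdef : ∀ x : C₀(ℕ, ℝ), V x = ∑' n : ℕ, (n : ℝ) * (x n) ^ n) :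
    (∀ x : C₀(ℕ, ℝ), (∀ n, 0 ≤ x n) → Summable (fun n : ℕ => (n : ℝ) * (x n) ^ n)) ∧
    (∀ x y : C₀(ℕ, ℝ), (∀ n, 0 ≤ x n) → (∀ n, 0 ≤ y n) →
      (∑' n : ℕ, (n : ℝ) * (max (x n) (y n)) ^ n) +
        (∑' n : ℕ, (n : ℝ) * (min (x n) (y n)) ^ n) = V x + V y) ∧
    ContinuousOn V {x : C₀(ℕ, ℝ) | ∀ n, 0 ≤ x n} ∧
    (∀ (N : ℕ) (e : C₀(ℕ, ℝ)), (∀ n, e n = if n = N then 1 else 0) → V e = N) := by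
  refine ⟨?_, ?_, ?_, ?_⟩
  · intro x hx
    exact summable_aux (fun n => x n) hx (tendsto_apply_aux x)
  · intro x y hx hy
    have hxt := tendsto_apply_aux x
    have hyt := tendsto_apply_aux y
    have hmax : Tendsto (fun n => max (x n) (y n)) atTop (nhds 0) := by
      simpa using hxt.max hyt
    have hmin : Tendsto (fun n => min (x n) (y n)) atTop (nhds 0) := by
      simpa using hxt.min hyt
    have s1 := summable_aux _ (fun n => le_max_of_le_left (hx n)) hmax
    have s2 := summable_aux _ (fun n => le_min (hx n) (hy n)) hmin
    have s3 := summable_aux (fun n => x n) hx hxt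
    have s4 := summable_aux (fun n => y n) hy hyt
    rw [hVdef x, hVdef y, ← s1.tsum_add s2, ← s3.tsum_add s4]
    apply tsum_congr
    intro n
    rcases le_total (x n) (y n) with h | h
    · rw [max_eq_right h, min_eq_left h, add_comm]
    · rw [max_eq_left h, min_eq_right h]
  · have hF : ∀ N : ℕ, ContinuousOn
        (fun x : C₀(ℕ, ℝ) => ∑ n ∈ Finset.range N, (n : ℝ) * (x n) ^ n)
        {x : C₀(ℕ, ℝ) | ∀ n, 0 ≤ x n} := by
      intro N
      apply Continuous.continuousOn
      exact continuous_finset_sum _ fun n _ =>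
        continuous_const.mul ((eval_continuous_aux n).pow n)
    have key : TendstoLocallyUniformlyOn
        (fun (N : ℕ) (x : C₀(ℕ, ℝ)) => ∑ n ∈ Finset.range N, (n : ℝ) * (x n) ^ n) V
        atTop {x : C₀(ℕ, ℝ) | ∀ n, 0 ≤ x n} := by
      rw [Metric.tendstoLocallyUniformlyOn_iff]
      intro ε hε x₀ hx₀
      obtain ⟨N₀, hN₀⟩ := eventually_atTop.mp
        ((tendsto_apply_aux x₀).eventually_lt_const (show (0:ℝ) < 1/4 by norm_num))
      have htail := tendsto_sum_nat_add (fun n : ℕ => (n : ℝ) * (1/2) ^ n)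
      refine ⟨{x : C₀(ℕ, ℝ) | ∀ n, 0 ≤ x n} ∩ Metric.ball x₀ (1/4),
        inter_mem_nhdsWithin _ (Metric.ball_mem_nhds _ (by norm_num : (0:ℝ) < 1/4)), ?_⟩
      filter_upwards [eventually_ge_atTop N₀, htail.eventually_lt_const hε] with N hNge hNlt
      rintro y ⟨hy, hyball⟩
      have hy2 : ∀ n, N ≤ n → y n ≤ 1/2 := by
        intro n hn
        have h1 : dist (y n) (x₀ n) ≤ dist y x₀ := dist_apply_le _ _ n
        have h2 : |y n - x₀ n| < 1/4 := by
          rw [← Real.dist_eq]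
          exact lt_of_le_of_lt h1 (Metric.mem_ball.mp hyball)
        have h3 := hN₀ n (le_trans hNge hn)
        have := abs_lt.mp h2
        linarith
      have hsum := summable_aux (fun n => y n) hy (tendsto_apply_aux y)
      have heq := hsum.sum_add_tsum_nat_add (f := fun n : ℕ => (n : ℝ) * (y n) ^ n) N
      rw [hVdef y, Real.dist_eq]
      have hdiff : (∑' n : ℕ, (n : ℝ) * (y n) ^ n)
          - ∑ n ∈ Finset.range N, (n : ℝ) * (y n) ^ n
          = ∑' i : ℕ, ((i + N : ℕ) : ℝ) * (y (i + N)) ^ (i + N) := by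
        linarith [heq]
      rw [hdiff]
      have hs1 : Summable (fun i : ℕ => ((i + N : ℕ) : ℝ) * (y (i + N)) ^ (i + N)) :=
        (summable_nat_add_iff N).2 hsum
      have hs2 : Summable (fun i : ℕ => ((i + N : ℕ) : ℝ) * (1/2 : ℝ) ^ (i + N)) :=
        (summable_nat_add_iff N).2 sumMaj
      have hnonneg : ∀ i : ℕ, (0:ℝ) ≤ ((i + N : ℕ) : ℝ) * (y (i + N)) ^ (i + N) :=
        fun i => mul_nonneg (Nat.cast_nonneg _) (pow_nonneg (hy _) _)
      rw [abs_of_nonneg (tsum_nonneg hnonneg)]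
      calc ∑' i : ℕ, ((i + N : ℕ) : ℝ) * (y (i + N)) ^ (i + N)
          ≤ ∑' i : ℕ, ((i + N : ℕ) : ℝ) * (1/2 : ℝ) ^ (i + N) := by
            apply Summable.tsum_le_tsum _ hs1 hs2
            intro i
            exact mul_le_mul_of_nonneg_left
              (pow_le_pow_left₀ (hy _) (hy2 _ (Nat.le_add_left N i)) _) (Nat.cast_nonneg _)
        _ < ε := hNlt
    exact key.continuousOn (Eventually.of_forall hF).frequently
  · intro N e he
    rw [hVdef e]
    have : (fun n : ℕ => (n : ℝ) * (e n) ^ n) = fun n : ℕ => if n = N then (N : ℝ) else 0 := by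
      funext n
      rw [he n]
      by_cases h : n = N
      · subst h; simp
      · rw [if_neg h]
        rcases eq_or_ne n 0 with h0 | h0
        · subst h0; simp [h]
        · simp [zero_pow h0, if_neg h]
    rw [this, tsum_ite_eq]
end

section
/- Let E be a Banach lattice of measurable functions over a purely nonatomic σ-finite measure space, order continuous, satisfying a lower q-estimate with constant 1 for some q < ∞ (i.e. ‖Σᵢ fᵢ‖^q ≥ Σᵢ ‖fᵢ‖^q for pairwise disjoint fᵢ). If V : E → ℝ is a valuation continuous at 0, with |V(f)| ≤ 1 whenever ‖f‖ ≤ δ, then for every f ∈ E, |V(f)| ≤ (‖f‖/δ)^q + 2. In particular V is bounded on norm-bounded sets. -/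
open MeasureTheory Filter

section AuxiliaryLemmas

variable {Ω : Type*} [MeasurableSpace Ω] {μ : Measure Ω}
variable {E : Type*} [NormedAddCommGroup E] [Lattice E] [HasSolidNorm E]
    [IsOrderedAddMonoid E] [NormedSpace ℝ E]

lemma tmono (T : E →ₗ[ℝ] (Ω →ₘ[μ] ℝ)) (hTinj : Function.Injective T)
    (hTsup : ∀ f g : E, T (f ⊔ g) = T f ⊔ T g) {a b : E} :
    a ≤ b ↔ T a ≤ T b := by
  constructor
  · intro h
    have h1 : T a ⊔ T b = T b := by rw [← hTsup, sup_eq_right.2 h]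
    exact sup_eq_right.1 h1
  · intro h
    have h1 : T (a ⊔ b) = T b := by rw [hTsup, sup_eq_right.2 h]
    exact sup_eq_right.1 (hTinj h1)

lemma tabs (T : E →ₗ[ℝ] (Ω →ₘ[μ] ℝ))
    (hTsup : ∀ f g : E, T (f ⊔ g) = T f ⊔ T g) (a : E) :
    T |a| = |T a| := by
  show T (a ⊔ -a) = T a ⊔ -(T a)
  rw [hTsup, map_neg]

lemma normmono {a b : E} (h0 : 0 ≤ a) (h : a ≤ b) : ‖a‖ ≤ ‖b‖ :=
  norm_le_norm_of_abs_le_abs (by rwa [abs_of_nonneg h0, abs_of_nonneg (h0.trans h)])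

lemma split_lemma
    (hna : ∀ A : Set Ω, MeasurableSet A → 0 < μ A →
      ∃ B ⊆ A, MeasurableSet B ∧ 0 < μ B ∧ μ B < μ A)
    (T : E →ₗ[ℝ] (Ω →ₘ[μ] ℝ)) (hTinj : Function.Injective T)
    (hTsup : ∀ f g : E, T (f ⊔ g) = T f ⊔ T g)
    (hTinf : ∀ f g : E, T (f ⊓ g) = T f ⊓ T g)
    (hideal : ∀ (g : Ω →ₘ[μ] ℝ) (f : E), |g| ≤ |T f| → ∃ h : E, T h = g)
    (hoc : ∀ s : ℕ → E, Antitone s → IsGLB (Set.range s) 0 →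
      Tendsto (fun n => ‖s n‖) atTop (nhds 0))
    (q : ℝ) (hq : 1 ≤ q)
    (hlow : ∀ (m : ℕ) (fi : Fin m → E),
      (Pairwise fun i j => |fi i| ⊓ |fi j| = 0) →
      ∑ i, ‖fi i‖ ^ q ≤ ‖∑ i, fi i‖ ^ q)
    (g : E) (hg : 0 ≤ g) (τ : ℝ) (hτ0 : 0 < τ) (hττ : τ < ‖g‖) :
    ∃ g₁ g₂ : E, g₁ + g₂ = g ∧ 0 ≤ g₁ ∧ 0 ≤ g₂ ∧ |g₁| ⊓ |g₂| = 0 ∧ ‖g₁‖ = τ := by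
  classical
  have qpos : (0:ℝ) < q := lt_of_lt_of_le one_pos hq
  set φ : Ω → ℝ := ⇑(T g) with hφdef
  have hφm : Measurable φ := (T g).measurable
  have hTg0 : (0 : Ω →ₘ[μ] ℝ) ≤ T g := by
    rw [← map_zero T]; exact (tmono T hTinj hTsup).1 hg
  have hφ0 : ∀ᵐ ω ∂μ, 0 ≤ φ ω := by
    filter_upwards [AEEqFun.coeFn_le.2 hTg0,
      (AEEqFun.coeFn_zero : ⇑(0 : Ω →ₘ[μ] ℝ) =ᵐ[μ] 0)] with ω h1 h2
    rw [h2] at h1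
    exact h1
  -- the subtype of measurable sets
  -- restriction operator
  have hRex : ∀ A : {A : Set Ω // MeasurableSet A}, ∃ u : E,
      T u = AEEqFun.mk (A.1.indicator φ) ((hφm.indicator A.2).aestronglyMeasurable) := by
    intro A
    apply hideal _ g
    refine AEEqFun.coeFn_le.1 ?_
    filter_upwards [AEEqFun.coeFn_abs (AEEqFun.mk (A.1.indicator φ)
        ((hφm.indicator A.2).aestronglyMeasurable)),
      AEEqFun.coeFn_abs (T g),
      AEEqFun.coeFn_mk (A.1.indicator φ) ((hφm.indicator A.2).aestronglyMeasurable)]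
        with ω h1 h2 h3
    rw [h1, h2, h3]
    by_cases hω : ω ∈ A.1 <;> simp [Set.indicator_apply, hω, abs_nonneg] <;> exact le_rfl
  choose R hR using hRex
  have hcoe : ∀ A : {A : Set Ω // MeasurableSet A},
      ⇑(T (R A)) =ᵐ[μ] A.1.indicator φ := by
    intro A; rw [hR A]; exact AEEqFun.coeFn_mk _ _

  -- basic facts about R
  have hR0 : ∀ A : {A : Set Ω // MeasurableSet A}, 0 ≤ R A := by
    intro A
    rw [tmono T hTinj hTsup, map_zero]
    refine AEEqFun.coeFn_le.1 ?_
    filter_upwards [hcoe A, (AEEqFun.coeFn_zero : ⇑(0 : Ω →ₘ[μ] ℝ) =ᵐ[μ] 0), hφ0]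
      with ω h1 h2 h3
    rw [h1, h2]
    by_cases hω : ω ∈ A.1 <;> simp [Set.indicator_apply, hω, h3]
  have hRg : ∀ A : {A : Set Ω // MeasurableSet A}, R A ≤ g := by
    intro A
    rw [tmono T hTinj hTsup]
    refine AEEqFun.coeFn_le.1 ?_
    filter_upwards [hcoe A, hφ0] with ω h1 h3
    rw [h1]
    by_cases hω : ω ∈ A.1
    · simp [Set.indicator_apply, hω, h3]; exact le_rfl
    · simp [Set.indicator_apply, hω, h3]; exact h3
  have hRmono : ∀ A B : {A : Set Ω // MeasurableSet A}, A.1 ⊆ B.1 → R A ≤ R B := by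
    intro A B hAB
    rw [tmono T hTinj hTsup]
    refine AEEqFun.coeFn_le.1 ?_
    filter_upwards [hcoe A, hcoe B, hφ0] with ω h1 h2 h3
    rw [h1, h2]
    by_cases hω : ω ∈ A.1
    · rw [Set.indicator_of_mem hω, Set.indicator_of_mem (hAB hω)]
    · rw [Set.indicator_of_notMem hω]
      by_cases hω2 : ω ∈ B.1 <;> simp [Set.indicator_apply, hω2, h3]
  have hRadd : ∀ A B : {A : Set Ω // MeasurableSet A}, Disjoint A.1 B.1 →
      R ⟨A.1 ∪ B.1, A.2.union B.2⟩ = R A + R B := by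
    intro A B hAB
    apply hTinj
    rw [map_add]
    apply AEEqFun.ext
    filter_upwards [hcoe ⟨A.1 ∪ B.1, A.2.union B.2⟩, hcoe A, hcoe B,
      AEEqFun.coeFn_add (T (R A)) (T (R B))] with ω h1 h2 h3 h4
    rw [h1, h4, Pi.add_apply, h2, h3, Set.indicator_union_of_disjoint hAB]
  have hRcompl : ∀ A : {A : Set Ω // MeasurableSet A},
      R A + R ⟨A.1ᶜ, A.2.compl⟩ = g := by
    intro A
    apply hTinj
    rw [map_add]
    apply AEEqFun.ext
    filter_upwards [hcoe A, hcoe ⟨A.1ᶜ, A.2.compl⟩,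
      AEEqFun.coeFn_add (T (R A)) (T (R ⟨A.1ᶜ, A.2.compl⟩))] with ω h1 h2 h3
    rw [h3, Pi.add_apply, h1, h2]
    by_cases hω : ω ∈ A.1 <;>
      simp [Set.indicator_apply, hω, φ]
  have hRdisj : ∀ A B : {A : Set Ω // MeasurableSet A}, Disjoint A.1 B.1 →
      |R A| ⊓ |R B| = 0 := by
    intro A B hAB
    apply hTinj
    rw [hTinf, tabs T hTsup, tabs T hTsup, map_zero]
    apply AEEqFun.ext
    filter_upwards [AEEqFun.coeFn_inf |T (R A)| |T (R B)|,
      AEEqFun.coeFn_abs (T (R A)), AEEqFun.coeFn_abs (T (R B)), hcoe A, hcoe B,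
      (AEEqFun.coeFn_zero : ⇑(0 : Ω →ₘ[μ] ℝ) =ᵐ[μ] 0)] with ω h1 h2 h3 h4 h5 h6
    rw [h1, h2, h3, h4, h5, h6, Pi.zero_apply]
    by_cases hω : ω ∈ A.1
    · have : ω ∉ B.1 := fun hb => Set.disjoint_left.1 hAB hω hb
      simp [Set.indicator_of_notMem this]
    · simp [Set.indicator_of_notMem hω]
  have hRzero : ∀ A : {A : Set Ω // MeasurableSet A},
      R A = 0 ↔ μ (A.1 ∩ {ω | φ ω ≠ 0}) = 0 := by
    intro A
    have hset : {ω | ¬ A.1.indicator φ ω = 0} = A.1 ∩ {ω | φ ω ≠ 0} := by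
      ext ω
      by_cases hω : ω ∈ A.1 <;> simp [Set.indicator_apply, hω] <;> tauto
    constructor
    · intro h
      have h1 : ⇑(T (R A)) =ᵐ[μ] 0 := by
        rw [h, map_zero]; exact AEEqFun.coeFn_zero
      have h2 : A.1.indicator φ =ᵐ[μ] 0 := ((hcoe A).symm.trans h1)
      have h3 := h2
      rw [Filter.EventuallyEq, ae_iff] at h3
      simp [hset] at h3; exact h3
    · intro h
      apply hTinj
      rw [map_zero]
      apply AEEqFun.ext
      refine (hcoe A).trans ?_
      have : A.1.indicator φ =ᵐ[μ] 0 := by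
        rw [Filter.EventuallyEq, ae_iff]
        simp [hset]; exact h
      exact this.trans (AEEqFun.coeFn_zero).symm
  have hRpos : ∀ A : {A : Set Ω // MeasurableSet A},
      0 < μ (A.1 ∩ {ω | φ ω ≠ 0}) → 0 < ‖R A‖ := by
    intro A hA
    rw [norm_pos_iff]
    intro h
    rw [hRzero A] at h
    exact absurd h (ne_of_gt hA)
  -- two-piece lower estimate
  have hlow2 : ∀ A B : {A : Set Ω // MeasurableSet A}, Disjoint A.1 B.1 →
      ‖R A‖ ^ q + ‖R B‖ ^ q ≤ ‖R ⟨A.1 ∪ B.1, A.2.union B.2⟩‖ ^ q := by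
    intro A B hAB
    have hpair : Pairwise fun i j : Fin 2 => |(![R A, R B]) i| ⊓ |(![R A, R B]) j| = 0 := by
      intro i j hij
      fin_cases i <;> fin_cases j <;>
        simp only [Matrix.cons_val_zero, Matrix.cons_val_one, Matrix.head_cons]
      · exact absurd rfl hij
      · exact hRdisj A B hAB
      · rw [inf_comm]; exact hRdisj A B hAB
      · exact absurd rfl hij
    have h := hlow 2 ![R A, R B] hpair
    rw [Fin.sum_univ_two, Fin.sum_univ_two] at h
    simp only [Matrix.cons_val_zero, Matrix.cons_val_one, Matrix.head_cons] at h
    rwa [hRadd A B hAB]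
  -- small pieces
  have hsmall : ∀ A : {A : Set Ω // MeasurableSet A}, A.1 ⊆ {ω | φ ω ≠ 0} →
      0 < μ A.1 → ∀ ε : ℝ, 0 < ε →
      ∃ B : {A : Set Ω // MeasurableSet A}, B.1 ⊆ A.1 ∧ 0 < μ B.1 ∧ ‖R B‖ ≤ ε := by
    intro A hAsupp hApos ε hε
    have hhalf : ∀ B : {A : Set Ω // MeasurableSet A}, 0 < μ B.1 →
        ∃ C : {A : Set Ω // MeasurableSet A}, C.1 ⊆ B.1 ∧ 0 < μ C.1 ∧
          ‖R C‖ ^ q ≤ ‖R B‖ ^ q / 2 := by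
      intro B hB
      obtain ⟨B', hB'sub, hB'm, hB'pos, hB'lt⟩ := hna B.1 B.2 hB
      set C : Set Ω := B.1 \ B' with hCdef
      have hCm : MeasurableSet C := B.2.diff hB'm
      have hCpos : 0 < μ C := by
        rcases eq_or_lt_of_le (zero_le : 0 ≤ μ C) with h | h
        · exfalso
          have hun : B.1 = B' ∪ C := (Set.union_diff_cancel hB'sub).symm
          have : μ B.1 ≤ μ B' + μ C := by rw [hun]; exact measure_union_le _ _
          rw [← h, add_zero] at this
          exact absurd this (not_le.2 hB'lt)
        · exact h
      have hdisj : Disjoint B' C := Set.disjoint_sdiff_right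
      have h2 := hlow2 ⟨B', hB'm⟩ ⟨C, hCm⟩ hdisj
      have hun : B' ∪ C = B.1 := Set.union_diff_cancel hB'sub
      have hBeq : R ⟨B' ∪ C, hB'm.union hCm⟩ = R B := by
        congr 1
        exact Subtype.ext hun
      rw [hBeq] at h2
      rcases le_total ‖R ⟨B', hB'm⟩‖ ‖R ⟨C, hCm⟩‖ with hle | hle
      · refine ⟨⟨B', hB'm⟩, hB'sub, hB'pos, ?_⟩
        have := Real.rpow_le_rpow (norm_nonneg _) hle qpos.le
        linarith
      · refine ⟨⟨C, hCm⟩, Set.diff_subset, hCpos, ?_⟩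
        have := Real.rpow_le_rpow (norm_nonneg _) hle qpos.le
        linarith
    have hiter : ∀ n : ℕ, ∃ B : {A : Set Ω // MeasurableSet A}, B.1 ⊆ A.1 ∧ 0 < μ B.1 ∧
        ‖R B‖ ^ q ≤ ‖R A‖ ^ q / 2 ^ n := by
      intro n
      induction n with
      | zero => exact ⟨A, subset_rfl, hApos, by simp⟩
      | succ n ih =>
        obtain ⟨B, hBsub, hBpos, hBle⟩ := ih
        obtain ⟨C, hCsub, hCpos, hCle⟩ := hhalf B hBpos
        refine ⟨C, hCsub.trans hBsub, hCpos, ?_⟩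
        calc ‖R C‖ ^ q ≤ ‖R B‖ ^ q / 2 := hCle
          _ ≤ (‖R A‖ ^ q / 2 ^ n) / 2 := by linarith
          _ = ‖R A‖ ^ q / 2 ^ (n + 1) := by ring
    obtain ⟨m, hm⟩ := exists_nat_gt (‖R A‖ ^ q / ε ^ q)
    obtain ⟨B, hBsub, hBpos, hBle⟩ := hiter m
    refine ⟨B, hBsub, hBpos, ?_⟩
    have hεq : 0 < ε ^ q := Real.rpow_pos_of_pos hε q
    have h2m : (m : ℝ) < 2 ^ m := by exact_mod_cast Nat.lt_two_pow_self (n := m)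
    have hlt : ‖R A‖ ^ q / ε ^ q < 2 ^ m := lt_trans hm h2m
    have h2mpos : (0:ℝ) < 2 ^ m := by positivity
    have hkey : ‖R A‖ ^ q / 2 ^ m < ε ^ q := by
      rw [div_lt_iff₀ hεq] at hlt
      rw [div_lt_iff₀ h2mpos]
      linarith
    by_contra hcon
    push_neg at hcon
    have h4 : ε ^ q < ‖R B‖ ^ q := Real.rpow_lt_rpow hε.le hcon qpos
    linarith

  -- empty set gives 0
  have hRempty : R ⟨∅, MeasurableSet.empty⟩ = 0 := by
    rw [hRzero]
    simp
  -- candidate sets for the greedy construction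
  set cand : {A : Set Ω // MeasurableSet A} → Set ℝ := fun B =>
    {x | ∃ C : {A : Set Ω // MeasurableSet A}, C.1 ⊆ B.1ᶜ ∧ ‖R B‖ + ‖R C‖ ≤ τ ∧ x = ‖R C‖}
    with hcanddef
  have hbdd : ∀ B, BddAbove (cand B) := by
    intro B
    refine ⟨‖g‖, ?_⟩
    rintro x ⟨C, -, -, rfl⟩
    exact normmono (hR0 C) (hRg C)
  have hstep : ∀ B : {A : Set Ω // MeasurableSet A}, ‖R B‖ ≤ τ →
      ∃ C : {A : Set Ω // MeasurableSet A}, C.1 ⊆ B.1ᶜ ∧ ‖R B‖ + ‖R C‖ ≤ τ ∧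
        sSup (cand B) ≤ 2 * ‖R C‖ := by
    intro B hB
    have h0 : (0:ℝ) ∈ cand B := by
      refine ⟨⟨∅, MeasurableSet.empty⟩, by simp, ?_, by rw [hRempty, norm_zero]⟩
      rw [hRempty, norm_zero, add_zero]
      exact hB
    have hs0 : 0 ≤ sSup (cand B) := le_csSup (hbdd B) h0
    rcases eq_or_lt_of_le hs0 with h | h
    · refine ⟨⟨∅, MeasurableSet.empty⟩, by simp, ?_, ?_⟩
      · rw [hRempty, norm_zero, add_zero]; exact hB
      · rw [hRempty, norm_zero, mul_zero, ← h]
    · obtain ⟨x, hx, hxs⟩ := exists_lt_of_lt_csSup ⟨0, h0⟩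
        (by linarith : sSup (cand B) / 2 < sSup (cand B))
      obtain ⟨C, hC1, hC2, rfl⟩ := hx
      exact ⟨C, hC1, hC2, by linarith⟩
  -- greedy sequence
  set nextS : {A : Set Ω // MeasurableSet A} → {A : Set Ω // MeasurableSet A} := fun B =>
    if h : ‖R B‖ ≤ τ then (hstep B h).choose else ⟨∅, MeasurableSet.empty⟩ with hnextdef
  set A : ℕ → {A : Set Ω // MeasurableSet A} := fun n =>
    Nat.rec ⟨∅, MeasurableSet.empty⟩
      (fun _ B => ⟨B.1 ∪ (nextS B).1, B.2.union (nextS B).2⟩) n with hAdef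
  have hAsucc : ∀ n, A (n+1) = ⟨(A n).1 ∪ (nextS (A n)).1, (A n).2.union (nextS (A n)).2⟩ :=
    fun n => rfl
  have hAτ : ∀ n, ‖R (A n)‖ ≤ τ := by
    intro n
    induction n with
    | zero =>
      have : A 0 = ⟨∅, MeasurableSet.empty⟩ := rfl
      rw [this, hRempty, norm_zero]
      exact hτ0.le
    | succ n ih =>
      have hnx : nextS (A n) = (hstep (A n) ih).choose := dif_pos ih
      obtain ⟨h1, h2, h3⟩ := (hstep (A n) ih).choose_spec
      have hd : Disjoint (A n).1 (nextS (A n)).1 := by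
        rw [hnx]
        exact (Set.subset_compl_iff_disjoint_left.1 h1)
      rw [hAsucc n, hRadd _ _ hd]
      calc ‖R (A n) + R (nextS (A n))‖ ≤ ‖R (A n)‖ + ‖R (nextS (A n))‖ := norm_add_le _ _
        _ ≤ τ := by rw [hnx]; exact h2
  have hPspec : ∀ n, (nextS (A n)).1 ⊆ (A n).1ᶜ ∧ ‖R (A n)‖ + ‖R (nextS (A n))‖ ≤ τ ∧
      sSup (cand (A n)) ≤ 2 * ‖R (nextS (A n))‖ := by
    intro n
    have hnx : nextS (A n) = (hstep (A n) (hAτ n)).choose := dif_pos (hAτ n)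
    rw [hnx]
    exact (hstep (A n) (hAτ n)).choose_spec
  have hAmono : ∀ n m : ℕ, n ≤ m → (A n).1 ⊆ (A m).1 := by
    intro n m hnm
    induction m with
    | zero => rw [Nat.le_zero.1 hnm]
    | succ m ih =>
      rcases Nat.lt_or_ge n (m+1) with h | h
      · have := ih (Nat.lt_succ_iff.1 h)
        rw [hAsucc m]
        exact this.trans Set.subset_union_left
      · rw [Nat.le_antisymm hnm h]
  have hsum : ∀ m : ℕ, R (A m) = ∑ i : Fin m, R (nextS (A i.1)) := by
    intro m
    induction m with
    | zero =>
      have : A 0 = ⟨∅, MeasurableSet.empty⟩ := rfl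
      rw [this, hRempty]
      simp
    | succ m ih =>
      have hd : Disjoint (A m).1 (nextS (A m)).1 :=
        Set.subset_compl_iff_disjoint_left.1 (hPspec m).1
      rw [hAsucc m, hRadd _ _ hd, ih, Fin.sum_univ_castSucc]
      rfl
  -- the limit set
  set U : {A : Set Ω // MeasurableSet A} :=
    ⟨⋃ n, (A n).1, MeasurableSet.iUnion (fun n => (A n).2)⟩ with hUdef
  have hAU : ∀ n, (A n).1 ⊆ U.1 := fun n => Set.subset_iUnion (fun n => (A n).1) n
  -- convergence of norms
  set sq : ℕ → E := fun n => R U - R (A n) with hsqdef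
  have hsq0 : ∀ n, 0 ≤ sq n := fun n => sub_nonneg.2 (hRmono _ _ (hAU n))
  have hsanti : Antitone sq := fun n m hnm =>
    sub_le_sub_left (hRmono _ _ (hAmono n m hnm)) _
  have hglb : IsGLB (Set.range sq) 0 := by
    constructor
    · rintro x ⟨n, rfl⟩
      exact hsq0 n
    · intro c hc
      have hc' : ∀ n, c ⊔ 0 ≤ sq n := fun n => sup_le (hc ⟨n, rfl⟩) (hsq0 n)
      have hcs : c ⊔ 0 = 0 := by
        apply hTinj
        rw [map_zero]
        apply AEEqFun.ext
        have h12 : ∀ n : ℕ, ∀ᵐ ω ∂μ, (⇑(T (c ⊔ 0))) ω ≤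
            U.1.indicator φ ω - (A n).1.indicator φ ω := by
          intro n
          have hle : ⇑(T (c ⊔ 0)) ≤ᵐ[μ] ⇑(T (sq n)) :=
            AEEqFun.coeFn_le.2 ((tmono T hTinj hTsup).1 (hc' n))
          have hTsq : T (sq n) = T (R U) - T (R (A n)) := by
            rw [hsqdef]; exact map_sub T _ _
          filter_upwards [hle, AEEqFun.coeFn_sub (T (R U)) (T (R (A n))),
            hcoe U, hcoe (A n)] with ω e1 e2 e3 e4
          rw [hTsq] at e1
          rw [e2, Pi.sub_apply, e3, e4] at e1
          exact e1
        have h3 : ∀ᵐ ω ∂μ, 0 ≤ (⇑(T (c ⊔ 0))) ω := by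
          have h0le : (0 : Ω →ₘ[μ] ℝ) ≤ T (c ⊔ 0) := by
            rw [← map_zero T]
            exact (tmono T hTinj hTsup).1 le_sup_right
          filter_upwards [AEEqFun.coeFn_le.2 h0le,
            (AEEqFun.coeFn_zero : ⇑(0 : Ω →ₘ[μ] ℝ) =ᵐ[μ] 0)] with ω e1 e2
          rw [e2] at e1
          exact e1
        filter_upwards [ae_all_iff.2 h12, h3,
          (AEEqFun.coeFn_zero : ⇑(0 : Ω →ₘ[μ] ℝ) =ᵐ[μ] 0)] with ω hω h0ω hz
        rw [hz]
        refine le_antisymm ?_ h0ω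
        by_cases hU : ω ∈ U.1
        · obtain ⟨n, hn⟩ : ∃ n, ω ∈ (A n).1 := Set.mem_iUnion.1 hU
          have := hω n
          rwa [Set.indicator_of_mem hn, Set.indicator_of_mem hU, sub_self] at this
        · have hA0 : ω ∉ (A 0).1 := fun h => hU (hAU 0 h)
          have := hω 0
          rwa [Set.indicator_of_notMem hA0, Set.indicator_of_notMem hU, sub_zero] at this
      calc c ≤ c ⊔ 0 := le_sup_left
        _ = 0 := hcs
  have hnorm0 : Tendsto (fun n => ‖sq n‖) atTop (nhds 0) := hoc sq hsanti hglb
  have hconv : Tendsto (fun n => ‖R (A n)‖) atTop (nhds ‖R U‖) := by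
    have h0 : Tendsto sq atTop (nhds 0) := tendsto_zero_iff_norm_tendsto_zero.2 hnorm0
    have h1 : Tendsto (fun n => R U - sq n) atTop (nhds (R U - 0)) :=
      tendsto_const_nhds.sub h0
    have h2 : (fun n => R U - sq n) = fun n => R (A n) := by
      funext n
      exact sub_sub_cancel _ _
    rw [h2, sub_zero] at h1
    exact h1.norm
  have hUle : ‖R U‖ ≤ τ := le_of_tendsto hconv (Filter.Eventually.of_forall hAτ)
  -- the norm is exactly τ
  have hUeq : ‖R U‖ = τ := by
    by_contra hne
    have hlt : ‖R U‖ < τ := lt_of_le_of_ne hUle hne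
    set Uc : {A : Set Ω // MeasurableSet A} := ⟨U.1ᶜ, U.2.compl⟩ with hUcdef
    have hgU : R U + R Uc = g := hRcompl U
    have hUcpos : 0 < ‖R Uc‖ := by
      have : ‖g‖ ≤ ‖R U‖ + ‖R Uc‖ := by
        rw [← hgU] at hττ ⊢
        exact norm_add_le _ _
      linarith
    have hUcne : R Uc ≠ 0 := by
      intro h
      rw [h, norm_zero] at hUcpos
      exact lt_irrefl _ hUcpos
    have hμUc : 0 < μ (Uc.1 ∩ {ω | φ ω ≠ 0}) := by
      rcases eq_or_lt_of_le (zero_le : 0 ≤ μ (Uc.1 ∩ {ω | φ ω ≠ 0})) with h | h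
      · exact absurd ((hRzero Uc).2 h.symm) hUcne
      · exact h
    set N : Set Ω := {ω | φ ω ≠ 0} with hNdef
    have hNm : MeasurableSet N := by
      have : N = φ ⁻¹' ({0}ᶜ) := by
        ext ω
        simp [hNdef]
      rw [this]
      exact hφm (measurableSet_singleton 0).compl
    set A' : {A : Set Ω // MeasurableSet A} := ⟨Uc.1 ∩ N, Uc.2.inter hNm⟩ with hA'def
    have hA'supp : A'.1 ⊆ N := Set.inter_subset_right
    obtain ⟨Cs, hCsub, hCpos, hCle⟩ := hsmall A' hA'supp hμUc (τ - ‖R U‖) (by linarith)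
    have hCsN : Cs.1 ⊆ N := hCsub.trans hA'supp
    have hcpos : 0 < ‖R Cs‖ := by
      apply hRpos
      have h' : Cs.1 ∩ N = Cs.1 := Set.inter_eq_self_of_subset_left hCsN
      rw [h']
      exact hCpos
    have hccand : ∀ n, ‖R Cs‖ ∈ cand (A n) := by
      intro n
      refine ⟨Cs, ?_, ?_, rfl⟩
      · have h1 : Cs.1 ⊆ U.1ᶜ := hCsub.trans (Set.inter_subset_left)
        have h2 : (A n).1 ⊆ U.1 := hAU n
        exact h1.trans (Set.compl_subset_compl.2 h2)
      · have h1 : ‖R (A n)‖ ≤ ‖R U‖ := normmono (hR0 _) (hRmono _ _ (hAU n))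
        linarith
    have hPn : ∀ n, ‖R Cs‖ ≤ 2 * ‖R (nextS (A n))‖ := fun n =>
      (le_csSup (hbdd _) (hccand n)).trans (hPspec n).2.2
    -- pieces are pairwise lattice-disjoint
    have hPdisj : ∀ i j : ℕ, i < j → Disjoint (nextS (A i)).1 (nextS (A j)).1 := by
      intro i j hij
      have h1 : (nextS (A i)).1 ⊆ (A (i+1)).1 := by
        rw [hAsucc i]
        exact Set.subset_union_right
      have h2 : (A (i+1)).1 ⊆ (A j).1 := hAmono _ _ hij
      have h3 : (nextS (A j)).1 ⊆ (A j).1ᶜ := (hPspec j).1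
      exact Set.disjoint_left.2 fun ω hωi hωj => h3 hωj (h2 (h1 hωi))
    -- contradiction via the lower q-estimate
    set c : ℝ := ‖R Cs‖ with hcdef
    have hcq : 0 < (c / 2) ^ q := Real.rpow_pos_of_pos (by linarith) q
    obtain ⟨m, hm⟩ := exists_nat_gt (‖g‖ ^ q / (c / 2) ^ q)
    have hpair : Pairwise fun i j : Fin m => |R (nextS (A i.1))| ⊓ |R (nextS (A j.1))| = 0 := by
      intro i j hij
      rcases lt_or_gt_of_ne (fun h => hij (Fin.ext h)) with h | h
      · exact hRdisj _ _ (hPdisj i.1 j.1 h)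
      · rw [inf_comm]
        exact hRdisj _ _ (hPdisj j.1 i.1 h)
    have hsum2 := hlow m (fun i : Fin m => R (nextS (A i.1))) hpair
    rw [← hsum m] at hsum2
    have hnorm : ‖R (A m)‖ ≤ ‖g‖ := normmono (hR0 _) (hRg _)
    have hub : ‖R (A m)‖ ^ q ≤ ‖g‖ ^ q := Real.rpow_le_rpow (norm_nonneg _) hnorm qpos.le
    have hterm : ∀ i : Fin m, (c / 2) ^ q ≤ ‖R (nextS (A i.1))‖ ^ q := by
      intro i
      apply Real.rpow_le_rpow (by linarith) _ qpos.le
      have := hPn i.1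
      linarith
    have hlb : (m : ℝ) * (c / 2) ^ q ≤ ∑ i : Fin m, ‖R (nextS (A i.1))‖ ^ q := by
      calc (m : ℝ) * (c / 2) ^ q = ∑ _i : Fin m, (c / 2) ^ q := by
            rw [Finset.sum_const, Finset.card_univ, Fintype.card_fin, nsmul_eq_mul]
        _ ≤ ∑ i : Fin m, ‖R (nextS (A i.1))‖ ^ q := Finset.sum_le_sum fun i _ => hterm i
    have : (m : ℝ) * (c / 2) ^ q ≤ ‖g‖ ^ q := le_trans hlb (le_trans hsum2 hub)
    rw [div_lt_iff₀ hcq] at hm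
    linarith
  exact ⟨R U, R ⟨U.1ᶜ, U.2.compl⟩, hRcompl U, hR0 _, hR0 _,
    hRdisj _ _ disjoint_compl_right, hUeq⟩

lemma count_lemma
    (hna : ∀ A : Set Ω, MeasurableSet A → 0 < μ A →
      ∃ B ⊆ A, MeasurableSet B ∧ 0 < μ B ∧ μ B < μ A)
    (T : E →ₗ[ℝ] (Ω →ₘ[μ] ℝ)) (hTinj : Function.Injective T)
    (hTsup : ∀ f g : E, T (f ⊔ g) = T f ⊔ T g)
    (hTinf : ∀ f g : E, T (f ⊓ g) = T f ⊓ T g)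
    (hideal : ∀ (g : Ω →ₘ[μ] ℝ) (f : E), |g| ≤ |T f| → ∃ h : E, T h = g)
    (hoc : ∀ s : ℕ → E, Antitone s → IsGLB (Set.range s) 0 →
      Tendsto (fun n => ‖s n‖) atTop (nhds 0))
    (q : ℝ) (hq : 1 ≤ q)
    (hlow : ∀ (m : ℕ) (fi : Fin m → E),
      (Pairwise fun i j => |fi i| ⊓ |fi j| = 0) →
      ∑ i, ‖fi i‖ ^ q ≤ ‖∑ i, fi i‖ ^ q)
    (δ : ℝ) (hδ : 0 < δ) :
    ∀ n : ℕ, ∀ g : E, 0 ≤ g → ∀ W : E → ℝ,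
      (∀ f g : E, W (f ⊔ g) + W (f ⊓ g) = W f + W g) → W 0 = 0 →
      (∀ f : E, ‖f‖ ≤ δ → |W f| ≤ 1) → ‖g‖ ^ q ≤ n * δ ^ q →
      |W g| ≤ (‖g‖ / δ) ^ q + 1 := by
  have qpos : (0:ℝ) < q := lt_of_lt_of_le one_pos hq
  have hδq : (0:ℝ) < δ ^ q := Real.rpow_pos_of_pos hδ q
  intro n
  induction n with
  | zero =>
    intro g hg W hW hW0 hWδ hn
    by_cases hgδ : ‖g‖ ≤ δ
    · have h1 := hWδ g hgδ
      have h2 : (0:ℝ) ≤ (‖g‖ / δ) ^ q := Real.rpow_nonneg (by positivity) q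
      linarith
    · push_neg at hgδ
      exfalso
      have : (0:ℝ) < ‖g‖ ^ q := Real.rpow_pos_of_pos (hδ.trans hgδ) q
      simp only [Nat.cast_zero, zero_mul] at hn
      linarith
  | succ n ih =>
    intro g hg W hW hW0 hWδ hn
    by_cases hgδ : ‖g‖ ≤ δ
    · have h1 := hWδ g hgδ
      have h2 : (0:ℝ) ≤ (‖g‖ / δ) ^ q := Real.rpow_nonneg (by positivity) q
      linarith
    · push_neg at hgδ
      obtain ⟨g₁, g₂, hsum, hg₁, hg₂, hdisj, hnorm₁⟩ :=
        split_lemma hna T hTinj hTsup hTinf hideal hoc q hq hlow g hg δ hδ hgδ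
      have hinf : g₁ ⊓ g₂ = 0 := by
        rw [← abs_of_nonneg hg₁, ← abs_of_nonneg hg₂]
        exact hdisj
      have hsup : g₁ ⊔ g₂ = g := by
        have h := inf_add_sup g₁ g₂
        rw [hinf, zero_add] at h
        rw [h, hsum]
      have hWsum : W g = W g₁ + W g₂ := by
        have h := hW g₁ g₂
        rw [hsup, hinf, hW0, add_zero] at h
        exact h
      have hq2 : ‖g₁‖ ^ q + ‖g₂‖ ^ q ≤ ‖g‖ ^ q := by
        have hpair : Pairwise fun i j : Fin 2 => |(![g₁, g₂]) i| ⊓ |(![g₁, g₂]) j| = 0 := by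
          intro i j hij
          fin_cases i <;> fin_cases j <;>
            simp only [Matrix.cons_val_zero, Matrix.cons_val_one, Matrix.head_cons]
          · exact absurd rfl hij
          · exact hdisj
          · rw [inf_comm]; exact hdisj
          · exact absurd rfl hij
        have h := hlow 2 ![g₁, g₂] hpair
        rw [Fin.sum_univ_two, Fin.sum_univ_two] at h
        simp only [Matrix.cons_val_zero, Matrix.cons_val_one, Matrix.head_cons] at h
        rwa [hsum] at h
      have hg₂n : ‖g₂‖ ^ q ≤ n * δ ^ q := by
        have h2 : δ ^ q + ‖g₂‖ ^ q ≤ ‖g‖ ^ q := by rw [← hnorm₁]; exact hq2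
        push_cast at hn ⊢
        linarith
      have hih := ih g₂ hg₂ W hW hW0 hWδ hg₂n
      have hWg₁ : |W g₁| ≤ 1 := hWδ g₁ (le_of_eq hnorm₁)
      have habs : |W g| ≤ |W g₁| + |W g₂| := by
        rw [hWsum]; exact abs_add_le _ _
      have hdiv : ∀ x : ℝ, 0 ≤ x → (x / δ) ^ q = x ^ q / δ ^ q := fun x hx =>
        Real.div_rpow hx hδ.le q
      have hkey : (‖g₂‖ / δ) ^ q + 1 ≤ (‖g‖ / δ) ^ q := by
        rw [hdiv _ (norm_nonneg _), hdiv _ (norm_nonneg _)]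
        have h2 : ‖g₂‖ ^ q + δ ^ q ≤ ‖g‖ ^ q := by
          rw [← hnorm₁]; linarith
        have h3 : (‖g₂‖ ^ q + δ ^ q) / δ ^ q ≤ ‖g‖ ^ q / δ ^ q := by gcongr
        rw [add_div, div_self (ne_of_gt hδq)] at h3
        exact h3
      linarith


end AuxiliaryLemmas

/-- An order continuous Banach lattice `E` of measurable functions
over a purely nonatomic σ-finite measure space (realized as an ideal in
`L⁰(μ)` via a lattice embedding `T`), satisfying a lower `q`-estimate with
constant 1. If `V` is a valuation continuous at `0` with `|V f| ≤ 1` whenever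
`‖f‖ ≤ δ`, then `|V f| ≤ (‖f‖/δ)^q + 2` for every `f`; in particular `V` is
bounded on norm-bounded sets. -/
theorem stmt14 {Ω : Type*} [MeasurableSpace Ω] (μ : Measure Ω) [SigmaFinite μ]
    (hna : ∀ A : Set Ω, MeasurableSet A → 0 < μ A →
      ∃ B ⊆ A, MeasurableSet B ∧ 0 < μ B ∧ μ B < μ A)
    {E : Type*} [NormedAddCommGroup E] [Lattice E] [HasSolidNorm E]
    [IsOrderedAddMonoid E] [CompleteSpace E] [NormedSpace ℝ E]
    (T : E →ₗ[ℝ] (Ω →ₘ[μ] ℝ)) (hTinj : Function.Injective T)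
    (hTsup : ∀ f g : E, T (f ⊔ g) = T f ⊔ T g)
    (hTinf : ∀ f g : E, T (f ⊓ g) = T f ⊓ T g)
    (hideal : ∀ (g : Ω →ₘ[μ] ℝ) (f : E), |g| ≤ |T f| → ∃ h : E, T h = g)
    (hindic : ∀ (A : Set Ω) (hA : MeasurableSet A), μ A < ⊤ →
      ∃ h : E, T h = AEEqFun.mk (A.indicator fun _ => (1 : ℝ))
        ((measurable_const.indicator hA).aestronglyMeasurable))
    (hoc : ∀ s : ℕ → E, Antitone s → IsGLB (Set.range s) 0 →
      Tendsto (fun n => ‖s n‖) atTop (nhds 0))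
    (q : ℝ) (hq : 1 ≤ q)
    (hlow : ∀ (m : ℕ) (fi : Fin m → E),
      (Pairwise fun i j => |fi i| ⊓ |fi j| = 0) →
      ∑ i, ‖fi i‖ ^ q ≤ ‖∑ i, fi i‖ ^ q)
    (V : E → ℝ)
    (hV : ∀ f g : E, V (f ⊔ g) + V (f ⊓ g) = V f + V g) (hV0 : V 0 = 0)
    (hVcont : ContinuousAt V 0)
    (δ : ℝ) (hδ : 0 < δ) (hVδ : ∀ f : E, ‖f‖ ≤ δ → |V f| ≤ 1) :
    ∀ f : E, |V f| ≤ (‖f‖ / δ) ^ q + 2 := by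
  intro f
  have qpos : (0:ℝ) < q := lt_of_lt_of_le one_pos hq
  have hδq : (0:ℝ) < δ ^ q := Real.rpow_pos_of_pos hδ q
  set W : E → ℝ := fun x => V (-x) with hWdef
  have hWval : ∀ a b : E, W (a ⊔ b) + W (a ⊓ b) = W a + W b := by
    intro a b
    show V (-(a ⊔ b)) + V (-(a ⊓ b)) = V (-a) + V (-b)
    rw [neg_sup, neg_inf, add_comm]
    exact hV (-a) (-b)
  have hW0 : W 0 = 0 := by
    show V (-0) = 0
    rw [neg_zero]
    exact hV0
  have hWδ : ∀ h : E, ‖h‖ ≤ δ → |W h| ≤ 1 := fun h hh => hVδ (-h) (by rwa [norm_neg])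
  -- decompose f into positive and negative parts
  have hdec : V f = V f⁺ + W f⁻ := by
    have h := hV f 0
    rw [hV0, add_zero] at h
    have h1 : f ⊔ 0 = f⁺ := (posPart_def f).symm
    have h2 : f ⊓ 0 = -(f⁻) := by
      rw [negPart_def, neg_sup, neg_neg, neg_zero]
    rw [h1, h2] at h
    exact h.symm
  -- the q-estimate on the two parts
  have hq2 : ‖f⁺‖ ^ q + ‖f⁻‖ ^ q ≤ ‖f‖ ^ q := by
    have hd : |f⁺| ⊓ |(-(f⁻))| = 0 := by
      rw [abs_neg, abs_of_nonneg (posPart_nonneg f), abs_of_nonneg (negPart_nonneg f)]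
      exact posPart_inf_negPart_eq_zero f
    have hpair : Pairwise fun i j : Fin 2 => |(![f⁺, -(f⁻)]) i| ⊓ |(![f⁺, -(f⁻)]) j| = 0 := by
      intro i j hij
      fin_cases i <;> fin_cases j <;>
        simp only [Matrix.cons_val_zero, Matrix.cons_val_one, Matrix.head_cons]
      · exact absurd rfl hij
      · exact hd
      · rw [inf_comm]; exact hd
      · exact absurd rfl hij
    have h := hlow 2 ![f⁺, -(f⁻)] hpair
    rw [Fin.sum_univ_two, Fin.sum_univ_two] at h
    simp only [Matrix.cons_val_zero, Matrix.cons_val_one, Matrix.head_cons] at h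
    rw [norm_neg] at h
    have hs : f⁺ + -(f⁻) = f := by
      rw [← sub_eq_add_neg]
      exact posPart_sub_negPart f
    rwa [hs] at h
  -- apply the counting lemma to each part
  have key := count_lemma hna T hTinj hTsup hTinf hideal hoc q hq hlow δ hδ
  obtain ⟨n₁, hn₁⟩ := exists_nat_ge (‖f⁺‖ ^ q / δ ^ q)
  obtain ⟨n₂, hn₂⟩ := exists_nat_ge (‖f⁻‖ ^ q / δ ^ q)
  have hb₁ : ‖f⁺‖ ^ q ≤ n₁ * δ ^ q := by
    rw [div_le_iff₀ hδq] at hn₁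
    linarith
  have hb₂ : ‖f⁻‖ ^ q ≤ n₂ * δ ^ q := by
    rw [div_le_iff₀ hδq] at hn₂
    linarith
  have hVp := key n₁ f⁺ (posPart_nonneg f) V hV hV0 hVδ hb₁
  have hVn := key n₂ f⁻ (negPart_nonneg f) W hWval hW0 hWδ hb₂
  -- final arithmetic
  have hdiv : ∀ x : ℝ, 0 ≤ x → (x / δ) ^ q = x ^ q / δ ^ q := fun x hx =>
    Real.div_rpow hx hδ.le q
  have hfin : (‖f⁺‖ / δ) ^ q + (‖f⁻‖ / δ) ^ q ≤ (‖f‖ / δ) ^ q := by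
    rw [hdiv _ (norm_nonneg _), hdiv _ (norm_nonneg _), hdiv _ (norm_nonneg _), ← add_div]
    gcongr
  have habs : |V f| ≤ |V f⁺| + |W f⁻| := by
    rw [hdec]
    exact abs_add_le _ _
  linarith
end

section
/- Let (uₙ) be a normalized unconditional basis of a Banach space E, giving E an atomic Banach lattice order. Then the map V : E → ℝ₊ defined by V(Σₙ aₙuₙ) = Σₙ n·|aₙ|ⁿ is a continuous valuation on E that is unbounded on norm-bounded sets (V(uₙ) = n while ‖uₙ‖ = 1). -/
set_option maxHeartbeats 1000000

/-- For a Banach space `E` with a normalized unconditional basis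
`(uₙ)` (coefficients `a`), with lattice operations given coordinatewise,
`V f = Σₙ n·|aₙ(f)|ⁿ` is a continuous valuation unbounded on norm-bounded sets
(`V uₙ = n`, `‖uₙ‖ = 1`). -/
theorem stmt15 {E : Type*} [NormedAddCommGroup E] [NormedSpace ℝ E] [CompleteSpace E]
    [Lattice E]
    (u : ℕ → E) (a : E → ℕ → ℝ)
    (hnorm : ∀ n, ‖u n‖ = 1)
    (hrepr : ∀ f : E, HasSum (fun n => a f n • u n) f)
    (huniq : ∀ (f : E) (b : ℕ → ℝ), HasSum (fun n => b n • u n) f → b = a f)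
    (C : ℝ) (hC : 0 < C)
    (hunc : ∀ (f : E) (n : ℕ), C * |a f n| ≤ ‖f‖)
    (hsup : ∀ (f g : E) (n : ℕ), a (f ⊔ g) n = max (a f n) (a g n))
    (hinf : ∀ (f g : E) (n : ℕ), a (f ⊓ g) n = min (a f n) (a g n))
    (V : E → ℝ) (hVdef : ∀ f : E, V f = ∑' n : ℕ, (n : ℝ) * |a f n| ^ n) :
    (∀ f : E, Summable (fun n : ℕ => (n : ℝ) * |a f n| ^ n)) ∧
    (∀ f : E, 0 ≤ V f) ∧
    (∀ f g : E, V (f ⊔ g) + V (f ⊓ g) = V f + V g) ∧ V 0 = 0 ∧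
    Continuous V ∧
    (∀ n : ℕ, V (u n) = n) := by
  -- coefficients tend to 0
  have hcoef0 : ∀ f : E, Filter.Tendsto (fun n => |a f n|) Filter.atTop (nhds 0) := by
    intro f
    have h1 := (hrepr f).summable.tendsto_atTop_zero
    have h2 := tendsto_zero_iff_norm_tendsto_zero.mp h1
    convert h2 using 2 with n
    rw [norm_smul, hnorm, Real.norm_eq_abs, mul_one]
  -- Lipschitz estimate for coefficients
  have hlip : ∀ (f g : E) (n : ℕ), C * |a f n - a g n| ≤ ‖f - g‖ := by
    intro f g n
    have hs : HasSum (fun n => (a f n - a g n) • u n) (f - g) := by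
      have := (hrepr f).sub (hrepr g)
      convert this using 2 with n
      rw [sub_smul]
    have := huniq _ _ hs
    have h := hunc (f - g) n
    rw [← this] at h
    exact h
  -- geometric bound summability
  have hgeo : Summable (fun n : ℕ => (n : ℝ) * (1/2 : ℝ) ^ n) := by
    have := summable_pow_mul_geometric_of_norm_lt_one (R := ℝ) 1
      (r := (1/2 : ℝ)) (by rw [Real.norm_eq_abs, abs_of_nonneg (by norm_num : (0:ℝ) ≤ 1/2)]; norm_num)
    simpa using this
  have hsummable : ∀ f : E, Summable (fun n : ℕ => (n : ℝ) * |a f n| ^ n) := by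
    intro f
    apply Summable.of_norm_bounded_eventually_nat (g := fun n => (n : ℝ) * (1/2 : ℝ) ^ n) hgeo
    have hev : ∀ᶠ n in Filter.atTop, |a f n| < 1/2 :=
      (hcoef0 f).eventually (gt_mem_nhds (by norm_num : (0:ℝ) < 1/2))
    filter_upwards [hev] with n hn
    rw [Real.norm_eq_abs, abs_mul, abs_pow, abs_abs, Nat.abs_cast]
    exact mul_le_mul_of_nonneg_left
      (pow_le_pow_left₀ (abs_nonneg _) hn.le n) (Nat.cast_nonneg n)
  have hnonneg : ∀ f : E, 0 ≤ V f := by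
    intro f
    rw [hVdef]
    exact tsum_nonneg fun n => by positivity
  refine ⟨hsummable, hnonneg, ?_, ?_, ?_, ?_⟩
  · -- valuation property
    intro f g
    rw [hVdef, hVdef, hVdef, hVdef,
      ← Summable.tsum_add (hsummable (f ⊔ g)) (hsummable (f ⊓ g)),
      ← Summable.tsum_add (hsummable f) (hsummable g)]
    congr 1
    funext n
    rw [hsup, hinf]
    rcases le_total (a f n) (a g n) with h | h
    · rw [sup_eq_right.mpr h, inf_eq_left.mpr h]; try ring
    · rw [sup_eq_left.mpr h, inf_eq_right.mpr h]; try ring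
  · -- V 0 = 0
    have ha0 : (fun _ : ℕ => (0:ℝ)) = a 0 := by
      apply huniq
      simpa using hasSum_zero
    rw [hVdef]
    have : ∀ n : ℕ, (n : ℝ) * |a 0 n| ^ n = 0 := by
      intro n
      rw [← ha0]
      cases n with
      | zero => simp
      | succ k => simp [zero_pow]
    simp [this]
  · -- continuity
    rw [continuous_iff_continuousAt]
    intro f₀
    obtain ⟨N, hN⟩ : ∃ N, ∀ n ≥ N, |a f₀ n| ≤ 1/4 := by
      have hev : ∀ᶠ n in Filter.atTop, |a f₀ n| < 1/4 :=
        (hcoef0 f₀).eventually (gt_mem_nhds (by norm_num : (0:ℝ) < 1/4))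
      obtain ⟨N, hN⟩ := Filter.eventually_atTop.mp hev
      exact ⟨N, fun n hn => (hN n hn).le⟩
    set M : ℝ := (‖f₀‖ + C) / C with hM
    have hM0 : 0 ≤ M := by positivity
    set b : ℕ → ℝ := fun n => if n < N then (n : ℝ) * M ^ n else (n : ℝ) * (1/2 : ℝ) ^ n
      with hb
    have hbsum : Summable b := by
      rw [← summable_nat_add_iff N]
      have : (fun n => b (n + N)) = fun n => ((n + N : ℕ) : ℝ) * (1/2 : ℝ) ^ (n + N) := by
        funext n
        rw [hb]
        simp only [Nat.not_lt.mpr (Nat.le_add_left N n), if_false]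
      rw [this]
      exact (summable_nat_add_iff N).mpr hgeo
    have hball : Metric.ball f₀ (C/4) ∈ nhds f₀ := Metric.ball_mem_nhds f₀ (by positivity)
    have hVOn : ContinuousOn V (Metric.ball f₀ (C/4)) := by
      have hVeq : V = fun f => ∑' n : ℕ, (n : ℝ) * |a f n| ^ n := funext hVdef
      rw [hVeq]
      apply continuousOn_tsum (u := b) ?_ hbsum
      · -- the bound
        intro n f hf
        rw [Real.norm_eq_abs, abs_mul, abs_pow, abs_abs, Nat.abs_cast]
        have hfn : |a f n| ≤ ‖f‖ / C := by
          rw [le_div_iff₀ hC, mul_comm]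
          exact hunc f n
        by_cases hn : n < N
        · have hbn : b n = (n : ℝ) * M ^ n := by simp [hb, hn]
          rw [hbn]
          apply mul_le_mul_of_nonneg_left ?_ (Nat.cast_nonneg n)
          apply pow_le_pow_left₀ (abs_nonneg _)
          have h1 : ‖f - f₀‖ < C / 4 := by
            rw [← dist_eq_norm]; exact Metric.mem_ball.mp hf
          have h2 : ‖f‖ ≤ ‖f₀‖ + C := by
            have h3 : f₀ + (f - f₀) = f := by abel
            calc ‖f‖ = ‖f₀ + (f - f₀)‖ := by rw [h3]
              _ ≤ ‖f₀‖ + ‖f - f₀‖ := norm_add_le _ _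
              _ ≤ ‖f₀‖ + C := by linarith
          calc |a f n| ≤ ‖f‖ / C := hfn
            _ ≤ (‖f₀‖ + C) / C := by gcongr
        · have hbn : b n = (n : ℝ) * (1/2 : ℝ) ^ n := by simp [hb, hn]
          rw [hbn]
          apply mul_le_mul_of_nonneg_left ?_ (Nat.cast_nonneg n)
          apply pow_le_pow_left₀ (abs_nonneg _)
          have h1 : ‖f - f₀‖ < C / 4 := by
            rw [← dist_eq_norm]; exact Metric.mem_ball.mp hf
          have h2 : |a f n - a f₀ n| ≤ 1/4 := by
            have h4 := hlip f f₀ n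
            rw [mul_comm, ← le_div_iff₀ hC] at h4
            calc |a f n - a f₀ n| ≤ ‖f - f₀‖ / C := h4
              _ ≤ (C/4) / C := by gcongr
              _ = 1/4 := by field_simp
          have h3 : |a f₀ n| ≤ 1/4 := hN n (Nat.le_of_not_lt hn)
          have h5 : |a f n| ≤ |a f n - a f₀ n| + |a f₀ n| := by
            calc |a f n| = |(a f n - a f₀ n) + a f₀ n| := by rw [sub_add_cancel]
              _ ≤ _ := abs_add_le _ _
          linarith
      · -- continuity of each term
        intro n
        have hlipn : LipschitzWith (Real.toNNReal (1/C)) (fun f : E => a f n) := by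
          apply LipschitzWith.of_dist_le_mul
          intro f g
          rw [Real.dist_eq, dist_eq_norm, Real.coe_toNNReal _ (by positivity)]
          have := hlip f g n
          rw [div_mul_eq_mul_div, le_div_iff₀ hC, mul_comm (|a f n - a g n|)]
          linarith [hlip f g n]
        exact (Continuous.mul continuous_const
          ((hlipn.continuous.abs).pow n)).continuousOn
    exact hVOn.continuousAt hball
  · -- V (u m) = m
    intro m
    have ham : (fun n : ℕ => if n = m then (1:ℝ) else 0) = a (u m) := by
      apply huniq
      have h1 : HasSum (fun n : ℕ => if n = m then u m else 0) (u m) := hasSum_ite_eq m (u m)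
      convert h1 using 2 with n
      by_cases h : n = m
      · subst h; simp
      · simp [h]
    rw [hVdef]
    rw [tsum_eq_single m]
    · rw [← ham]; simp
    · intro n hn
      rw [← ham]
      simp only [if_neg hn]
      cases n with
      | zero => simp
      | succ k => simp [zero_pow]
end

section
/- Let (Ω, Σ, μ) be a nonatomic finite measure space with μ(Ω) > 0, 1 ≤ p < ∞, and θ : ℝ → ℝ continuous and nonnegative with ∫_Ω θ(f(t)) dμ(t) < ∞ for every f ∈ Lᵖ(μ). Then there exist a, b ∈ ℝ with θ(λ) ≤ a·|λ|^p + b for all λ ∈ ℝ. -/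
open MeasureTheory
open scoped ENNReal NNReal

lemma small_subset' {Ω : Type*} [MeasurableSpace Ω] (μ : Measure Ω) [IsFiniteMeasure μ]
    (hna : ∀ A : Set Ω, MeasurableSet A → 0 < μ A →
      ∃ B ⊆ A, MeasurableSet B ∧ 0 < μ B ∧ μ B < μ A)
    (S : Set Ω) (hS : MeasurableSet S) (hS0 : 0 < μ S) (δ : ℝ≥0∞) (hδ : 0 < δ) :
    ∃ C ⊆ S, MeasurableSet C ∧ 0 < μ C ∧ μ C ≤ δ := by
  have key : ∀ n : ℕ, ∃ C ⊆ S, MeasurableSet C ∧ 0 < μ C ∧ μ C ≤ μ S / 2 ^ n := by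
    intro n
    induction n with
    | zero => exact ⟨S, subset_rfl, hS, hS0, by simp⟩
    | succ n ih =>
      obtain ⟨C, hCS, hCm, hC0, hCle⟩ := ih
      obtain ⟨B, hBC, hBm, hB0, hBlt⟩ := hna C hCm hC0
      have hCfin : μ C ≠ ⊤ := measure_ne_top μ C
      have hdiff : μ (C \ B) = μ C - μ B := measure_diff hBC hBm.nullMeasurableSet (measure_ne_top μ B)
      have hdd : ∀ x : ℝ≥0∞, x / 2 ^ n / 2 = x / 2 ^ (n + 1) := fun x => by
        rw [pow_succ, div_eq_mul_inv, div_eq_mul_inv, div_eq_mul_inv,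
          ENNReal.mul_inv (by simp) (by simp), mul_assoc]
      by_cases h : μ B ≤ μ C / 2
      · exact ⟨B, hBC.trans hCS, hBm, hB0, h.trans (by
          rw [← hdd]
          exact ENNReal.div_le_div_right hCle 2)⟩
      · push_neg at h
        refine ⟨C \ B, (Set.diff_subset).trans hCS, hCm.diff hBm, ?_, ?_⟩
        · rw [hdiff]
          exact tsub_pos_of_lt hBlt
        · rw [hdiff]
          calc μ C - μ B ≤ μ C - μ C / 2 := tsub_le_tsub_left h.le _
            _ = μ C / 2 := ENNReal.sub_half hCfin
            _ ≤ μ S / 2 ^ n / 2 := ENNReal.div_le_div_right hCle 2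
            _ = μ S / 2 ^ (n + 1) := hdd _
  obtain ⟨n, hn⟩ := ENNReal.exists_inv_two_pow_lt (show δ / μ S ≠ 0 by
    simp [ENNReal.div_eq_zero_iff, hδ.ne', measure_ne_top μ S])
  obtain ⟨C, h1, h2, h3, h4⟩ := key n
  refine ⟨C, h1, h2, h3, h4.trans ?_⟩
  rw [ENNReal.div_eq_inv_mul, mul_comm]
  calc μ S * (2 ^ n)⁻¹ ≤ μ S * (δ / μ S) := by
        gcongr
        simpa [ENNReal.inv_pow] using hn.le
    _ ≤ δ := ENNReal.mul_div_le

lemma near_max' {Ω : Type*} [MeasurableSpace Ω] (μ : Measure Ω) [IsFiniteMeasure μ]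
    (T : Set Ω) (d : ℝ≥0∞) (hd : d ≠ ⊤) :
    ∃ C, C ⊆ T ∧ MeasurableSet C ∧ μ C ≤ d ∧
      ∀ C', C' ⊆ T → MeasurableSet C' → μ C' ≤ d → μ C' ≤ 2 * μ C := by
  set F : Set ℝ≥0∞ := {r | ∃ C, C ⊆ T ∧ MeasurableSet C ∧ μ C = r ∧ r ≤ d} with hF
  have h0 : (0 : ℝ≥0∞) ∈ F := ⟨∅, Set.empty_subset _, MeasurableSet.empty, by simp, zero_le⟩
  have hbdd : ∀ r ∈ F, r ≤ d := by rintro r ⟨C, -, -, -, h⟩; exact h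
  set t := sSup F with ht
  have htd : t ≤ d := sSup_le hbdd
  have htne : t ≠ ⊤ := fun h => hd (top_le_iff.mp (h ▸ htd))
  rcases eq_or_lt_of_le (zero_le : 0 ≤ t) with h0t | h0t
  · refine ⟨∅, Set.empty_subset _, MeasurableSet.empty, by simp, ?_⟩
    intro C' hC'T hC'm hC'd
    have : μ C' ≤ t := le_sSup ⟨C', hC'T, hC'm, rfl, hC'd⟩
    simpa [← h0t] using this
  · have hhalf : t / 2 < t := ENNReal.half_lt_self h0t.ne' htne
    obtain ⟨r, hrF, hr⟩ := lt_sSup_iff.mp hhalf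
    obtain ⟨C, hCT, hCm, hCr, hCd⟩ := hrF
    refine ⟨C, hCT, hCm, hCr ▸ hCd, ?_⟩
    intro C' hC'T hC'm hC'd
    have h1 : μ C' ≤ t := le_sSup ⟨C', hC'T, hC'm, rfl, hC'd⟩
    have h2 : t ≤ 2 * μ C := by
      rw [hCr]
      calc t = 2 * (t / 2) := (ENNReal.mul_div_cancel (by norm_num) (by norm_num)).symm
        _ ≤ 2 * r := mul_le_mul_right hr.le 2
    exact h1.trans h2

lemma half_subset' {Ω : Type*} [MeasurableSpace Ω] (μ : Measure Ω) [IsFiniteMeasure μ]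
    (hna : ∀ A : Set Ω, MeasurableSet A → 0 < μ A →
      ∃ B ⊆ A, MeasurableSet B ∧ 0 < μ B ∧ μ B < μ A)
    (S : Set Ω) (hS : MeasurableSet S) (ε : ℝ≥0∞) (hε0 : 0 < ε) (hεt : ε ≠ ⊤)
    (hεS : ε ≤ μ S) :
    ∃ B ⊆ S, MeasurableSet B ∧ ε / 2 ≤ μ B ∧ μ B ≤ ε := by
  classical
  -- the greedy "piece" extractor
  have pexi : ∀ D : Set Ω, ∃ C, C ⊆ S \ D ∧ MeasurableSet C ∧ μ C ≤ ε - μ D ∧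
      ∀ C', C' ⊆ S \ D → MeasurableSet C' → μ C' ≤ ε - μ D → μ C' ≤ 2 * μ C :=
    fun D => near_max' μ (S \ D) (ε - μ D) (fun h => hεt (top_le_iff.mp (h ▸ tsub_le_self)))
  set piece : Set Ω → Set Ω := fun D => (pexi D).choose with hpiece
  have pprop : ∀ D, piece D ⊆ S \ D ∧ MeasurableSet (piece D) ∧ μ (piece D) ≤ ε - μ D ∧
      ∀ C', C' ⊆ S \ D → MeasurableSet C' → μ C' ≤ ε - μ D → μ C' ≤ 2 * μ (piece D) :=
    fun D => (pexi D).choose_spec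
  set D : ℕ → Set Ω := fun n => Nat.rec (∅ : Set Ω) (fun _ Dn => Dn ∪ piece Dn) n with hD
  have hD0 : D 0 = ∅ := rfl
  have hDs : ∀ n, D (n + 1) = D n ∪ piece (D n) := fun n => rfl
  have hinv : ∀ n, MeasurableSet (D n) ∧ D n ⊆ S ∧ μ (D n) ≤ ε := by
    intro n
    induction n with
    | zero => exact ⟨MeasurableSet.empty, Set.empty_subset _, by rw [hD0]; simp⟩
    | succ n ih =>
      obtain ⟨hm, hsub, hle⟩ := ih
      obtain ⟨hp1, hp2, hp3, _⟩ := pprop (D n)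
      refine ⟨?_, ?_, ?_⟩
      · rw [hDs]; exact hm.union hp2
      · rw [hDs]; exact Set.union_subset hsub (hp1.trans Set.diff_subset)
      · rw [hDs]
        calc μ (D n ∪ piece (D n)) ≤ μ (D n) + μ (piece (D n)) := measure_union_le _ _
          _ ≤ μ (D n) + (ε - μ (D n)) := by gcongr
          _ = ε := add_tsub_cancel_of_le hle
  have hmono : Monotone D := by
    apply monotone_nat_of_le_succ
    intro n; rw [hDs]; exact Set.subset_union_left
  set B : Set Ω := ⋃ n, D n with hB
  have hBm : MeasurableSet B := MeasurableSet.iUnion (fun n => (hinv n).1)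
  have hBS : B ⊆ S := Set.iUnion_subset (fun n => (hinv n).2.1)
  have hBε : μ B ≤ ε := by
    rw [hB, hmono.measure_iUnion]
    exact iSup_le (fun n => (hinv n).2.2)
  refine ⟨B, hBS, hBm, ?_, hBε⟩
  by_contra hcon
  push_neg at hcon
  -- μ B < ε / 2
  have hεB : ε / 2 ≤ ε - μ B := by
    calc ε / 2 = ε - ε / 2 := (ENNReal.sub_half hεt).symm
      _ ≤ ε - μ B := tsub_le_tsub_left hcon.le _
  have hSB : 0 < μ (S \ B) := by
    have : μ (S \ B) = μ S - μ B := measure_diff hBS hBm.nullMeasurableSet (measure_ne_top μ B)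
    rw [this]
    calc (0 : ℝ≥0∞) < ε / 2 := ENNReal.half_pos hε0.ne'
      _ ≤ ε - μ B := hεB
      _ ≤ μ S - μ B := tsub_le_tsub_right hεS _
  obtain ⟨C₀, hC₀S, hC₀m, hC₀0, hC₀le⟩ :=
    small_subset' μ hna (S \ B) (hS.diff hBm) hSB (ε - μ B)
      (lt_of_lt_of_le (ENNReal.half_pos hε0.ne') hεB)
  -- each piece has measure ≥ μ C₀ / 2
  have hpc : ∀ n, μ C₀ / 2 ≤ μ (piece (D n)) := by
    intro n
    have hsub : C₀ ⊆ S \ D n := hC₀S.trans (Set.diff_subset_diff_right (Set.subset_iUnion D n))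
    have hle : μ C₀ ≤ ε - μ (D n) :=
      hC₀le.trans (tsub_le_tsub_left (measure_mono (Set.subset_iUnion D n)) _)
    have := (pprop (D n)).2.2.2 C₀ hsub hC₀m hle
    exact ENNReal.div_le_of_le_mul' this
  have hgrow : ∀ n : ℕ, (n : ℝ≥0∞) * (μ C₀ / 2) ≤ μ (D n) := by
    intro n
    induction n with
    | zero => simp
    | succ n ih =>
      have hdisj : Disjoint (D n) (piece (D n)) :=
        Set.disjoint_of_subset_right (pprop (D n)).1 (Set.disjoint_sdiff_right)
      rw [hDs, measure_union hdisj (pprop (D n)).2.1]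
      push_cast
      calc ((n : ℝ≥0∞) + 1) * (μ C₀ / 2) = (n : ℝ≥0∞) * (μ C₀ / 2) + μ C₀ / 2 := by ring
        _ ≤ μ (D n) + μ (piece (D n)) := add_le_add ih (hpc n)
  have hx0 : μ C₀ / 2 ≠ 0 := by
    simp only [ne_eq, ENNReal.div_eq_zero_iff]
    push_neg
    exact ⟨hC₀0.ne', by norm_num⟩
  have hxt : μ C₀ / 2 ≠ ⊤ := by
    refine ne_top_of_le_ne_top hεt ?_
    exact le_trans (ENNReal.half_le_self) (hC₀le.trans tsub_le_self)
  obtain ⟨n, hn⟩ := ENNReal.exists_nat_gt (show ε / (μ C₀ / 2) ≠ ⊤ from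
    (ENNReal.div_lt_top hεt hx0).ne)
  have : ε < (n : ℝ≥0∞) * (μ C₀ / 2) := by
    rwa [ENNReal.div_lt_iff (Or.inl hx0) (Or.inl hxt)] at hn
  have hfinal : ε < μ B :=
    lt_of_lt_of_le this ((hgrow n).trans (measure_mono (Set.subset_iUnion D n)))
  exact absurd hfinal (not_lt.mpr hBε)

lemma exists_disjoint_seq' {Ω : Type*} [MeasurableSpace Ω] (μ : Measure Ω) [IsFiniteMeasure μ]
    (hna : ∀ A : Set Ω, MeasurableSet A → 0 < μ A →
      ∃ B ⊆ A, MeasurableSet B ∧ 0 < μ B ∧ μ B < μ A)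
    (ε : ℕ → ℝ≥0∞) (hε0 : ∀ n, 0 < ε n) (hεt : ∀ n, ε n ≠ ⊤)
    (hsum : ∀ n, ∑ k ∈ Finset.range n, ε k ≤ μ Set.univ / 2)
    (hεle : ∀ n, ε n ≤ μ Set.univ / 2) :
    ∃ A : ℕ → Set Ω, (∀ n, MeasurableSet (A n)) ∧ Pairwise (Function.onFun Disjoint A) ∧
      ∀ n, ε n / 2 ≤ μ (A n) ∧ μ (A n) ≤ ε n := by
  classical
  let pick : ℕ → Set Ω → Set Ω := fun n D =>
    if h : ∃ B ⊆ Set.univ \ D, MeasurableSet B ∧ ε n / 2 ≤ μ B ∧ μ B ≤ ε n then h.choose else ∅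
  let st : ℕ → Set Ω × Set Ω := fun n =>
    Nat.rec (pick 0 ∅, pick 0 ∅) (fun k s => (pick (k + 1) s.2, s.2 ∪ pick (k + 1) s.2)) n
  set A : ℕ → Set Ω := fun n => (st n).1 with hA
  set U : ℕ → Set Ω := fun n => (st n).2 with hU
  have hU0 : U 0 = A 0 := rfl
  have hUs : ∀ n, U (n + 1) = U n ∪ A (n + 1) := fun n => rfl
  have hAs : ∀ n, A (n + 1) = pick (n + 1) (U n) := fun n => rfl
  have hA0 : A 0 = pick 0 ∅ := rfl
  -- generic: if pick's condition holds, properties of pick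
  have hpick : ∀ n D, (∃ B ⊆ Set.univ \ D, MeasurableSet B ∧ ε n / 2 ≤ μ B ∧ μ B ≤ ε n) →
      pick n D ⊆ Set.univ \ D ∧ MeasurableSet (pick n D) ∧ ε n / 2 ≤ μ (pick n D) ∧
        μ (pick n D) ≤ ε n := by
    intro n D h
    have : pick n D = h.choose := dif_pos h
    rw [this]
    exact h.choose_spec
  -- condition always holds when μ D ≤ μΩ/2 and D measurable
  have hcond : ∀ n (D : Set Ω), MeasurableSet D → μ D ≤ μ Set.univ / 2 →
      ∃ B ⊆ Set.univ \ D, MeasurableSet B ∧ ε n / 2 ≤ μ B ∧ μ B ≤ ε n := by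
    intro n D hDm hDle
    apply half_subset' μ hna (Set.univ \ D) (MeasurableSet.univ.diff hDm) (ε n) (hε0 n) (hεt n)
    have h1 : μ (Set.univ \ D) = μ Set.univ - μ D :=
      measure_diff (Set.subset_univ D) hDm.nullMeasurableSet (measure_ne_top μ D)
    rw [h1]
    calc ε n ≤ μ Set.univ / 2 := hεle n
      _ = μ Set.univ - μ Set.univ / 2 := (ENNReal.sub_half (measure_ne_top μ _)).symm
      _ ≤ μ Set.univ - μ D := tsub_le_tsub_left hDle _
  have hinv : ∀ n, MeasurableSet (U n) ∧ μ (U n) ≤ ∑ k ∈ Finset.range (n + 1), ε k ∧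
      (∀ k ≤ n, MeasurableSet (A k) ∧ ε k / 2 ≤ μ (A k) ∧ μ (A k) ≤ ε k) ∧
      (∀ k ≤ n, A k ⊆ U k) ∧ (∀ k < n, A (k + 1) ⊆ Set.univ \ U k) := by
    intro n
    induction n with
    | zero =>
      have h0 := hpick 0 ∅ (hcond 0 ∅ MeasurableSet.empty (by simp))
      obtain ⟨hs, hm, h2, h3⟩ := h0
      rw [← hA0] at hs hm h2 h3
      refine ⟨hU0 ▸ hm, ?_, ?_, ?_, by omega⟩
      · rw [hU0]; simpa using h3
      · intro k hk; interval_cases k; exact ⟨hm, h2, h3⟩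
      · intro k hk; interval_cases k; rw [hU0]
    | succ n ih =>
      obtain ⟨hUm, hUle, hAk, hAU, hAd⟩ := ih
      have hcnd := hcond (n + 1) (U n) hUm (hUle.trans (hsum (n + 1)))
      have h0 := hpick (n + 1) (U n) hcnd
      rw [← hAs] at h0
      obtain ⟨hs, hm, h2, h3⟩ := h0
      refine ⟨?_, ?_, ?_, ?_, ?_⟩
      · rw [hUs]; exact hUm.union hm
      · rw [hUs]
        calc μ (U n ∪ A (n + 1)) ≤ μ (U n) + μ (A (n + 1)) := measure_union_le _ _
          _ ≤ (∑ k ∈ Finset.range (n + 1), ε k) + ε (n + 1) := add_le_add hUle h3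
          _ = ∑ k ∈ Finset.range (n + 2), ε k := (Finset.sum_range_succ _ _).symm
      · intro k hk
        rcases Nat.lt_succ_iff_lt_or_eq.mp (Nat.lt_succ_of_le hk) with h | h
        · exact hAk k (by omega)
        · subst h; exact ⟨hm, h2, h3⟩
      · intro k hk
        rcases Nat.le_succ_iff.mp hk with h | h
        · exact hAU k h
        · subst h; rw [hUs]; exact Set.subset_union_right
      · intro k hk
        rcases Nat.lt_succ_iff_lt_or_eq.mp hk with h | h
        · exact hAd k h
        · subst h; exact hs
  have hUmono : Monotone U := by
    apply monotone_nat_of_le_succ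
    intro n; rw [hUs]; exact Set.subset_union_left
  refine ⟨A, fun n => ((hinv n).2.2.1 n le_rfl).1, ?_, fun n => ((hinv n).2.2.1 n le_rfl).2⟩
  have key : ∀ i j, i < j → Disjoint (A i) (A j) := by
    intro i j hij
    obtain ⟨k, rfl⟩ : ∃ k, j = k + 1 := ⟨j - 1, by omega⟩
    have h1 : A (k + 1) ⊆ Set.univ \ U k := (hinv (k + 1)).2.2.2.2 k (Nat.lt_succ_self k)
    have h2 : A i ⊆ U k := ((hinv i).2.2.2.1 i le_rfl).trans (hUmono (by omega))
    rw [Set.disjoint_left]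
    intro x hxi hxj
    exact (h1 hxj).2 (h2 hxi)
  intro i j hij
  rcases lt_or_gt_of_ne hij with h | h
  · exact key i j h
  · exact (key j i h).symm

/-- Finite-measure version of Statement 18: `θ(λ) ≤ a·|λ|^p + b`. -/
theorem stmt19 {Ω : Type*} [MeasurableSpace Ω] (μ : Measure Ω) [IsFiniteMeasure μ]
    (hna : ∀ A : Set Ω, MeasurableSet A → 0 < μ A →
      ∃ B ⊆ A, MeasurableSet B ∧ 0 < μ B ∧ μ B < μ A)
    (hpos : 0 < μ Set.univ)
    (p : NNReal) (hp : 1 ≤ p)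
    (θ : ℝ → ℝ) (hθc : Continuous θ) (hθ0 : ∀ l : ℝ, 0 ≤ θ l)
    (hfin : ∀ f : Lp ℝ p μ, ∫⁻ t, ENNReal.ofReal (θ (f t)) ∂μ < ⊤) :
    ∃ a b : ℝ, ∀ l : ℝ, θ l ≤ a * |l| ^ (p : ℝ) + b := by
  classical
  by_contra hcon
  push_neg at hcon
  set M := (μ Set.univ).toReal with hMdef
  have hM0 : 0 < M := ENNReal.toReal_pos hpos.ne' (measure_ne_top μ _)
  have hμM : ENNReal.ofReal M = μ Set.univ := ENNReal.ofReal_toReal (measure_ne_top μ _)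
  set c : ℕ → ℝ := fun n => 4 ^ (n + 1) / M with hcdef
  have hlam' : ∀ n : ℕ, ∃ l, c n * |l| ^ (p : ℝ) + c n < θ l := fun n => hcon (c n) (c n)
  choose lam hlam using hlam'
  set X : ℕ → ℝ := fun n => |lam n| ^ (p : ℝ) with hXdef
  have hX0 : ∀ n, 0 ≤ X n := fun n => Real.rpow_nonneg (abs_nonneg _) _
  set m : ℕ → ℝ := fun n => M / (4 ^ (n + 1) * (X n + 1)) with hmdef
  have hm0 : ∀ n, 0 < m n := fun n =>
    div_pos hM0 (by positivity)
  have hgeom : ∀ n : ℕ, (1 : ℝ) ≤ (1 / 2) ^ (n + 2) * 4 ^ (n + 1) := by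
    intro n
    induction n with
    | zero => norm_num
    | succ n ih =>
      have h : (1 / 2 : ℝ) ^ (n + 3) * 4 ^ (n + 2) = 2 * ((1 / 2) ^ (n + 2) * 4 ^ (n + 1)) := by
        ring
      rw [h]; linarith
  have hmle : ∀ n, m n ≤ M * (1 / 2) ^ (n + 2) := by
    intro n
    have h1 : m n ≤ M / 4 ^ (n + 1) := by
      apply div_le_div_of_nonneg_left hM0.le (by positivity)
      nlinarith [hX0 n, pow_pos (by norm_num : (0:ℝ) < 4) (n + 1)]
    refine h1.trans ?_
    rw [div_le_iff₀ (by positivity)]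
    calc M = M * 1 := (mul_one M).symm
      _ ≤ M * ((1 / 2) ^ (n + 2) * 4 ^ (n + 1)) := by
          exact mul_le_mul_of_nonneg_left (hgeom n) hM0.le
      _ = M * (1 / 2) ^ (n + 2) * 4 ^ (n + 1) := by ring
  set ε : ℕ → ℝ≥0∞ := fun n => ENNReal.ofReal (m n) with hεdef
  have hε0 : ∀ n, 0 < ε n := fun n => ENNReal.ofReal_pos.mpr (hm0 n)
  have hεt : ∀ n, ε n ≠ ⊤ := fun n => ENNReal.ofReal_ne_top
  have hhalfμ : ENNReal.ofReal (M / 2) = μ Set.univ / 2 := by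
    rw [ENNReal.ofReal_div_of_pos (by norm_num), hμM]
    norm_num
  have hsum : ∀ n, ∑ k ∈ Finset.range n, ε k ≤ μ Set.univ / 2 := by
    intro n
    have h1 : ∑ k ∈ Finset.range n, m k ≤ M / 2 := by
      calc ∑ k ∈ Finset.range n, m k ≤ ∑ k ∈ Finset.range n, M * (1 / 2) ^ (k + 2) :=
            Finset.sum_le_sum (fun k _ => hmle k)
        _ = (M / 4) * ∑ k ∈ Finset.range n, (1 / 2) ^ k := by
            rw [Finset.mul_sum]
            exact Finset.sum_congr rfl (fun k _ => by ring)
        _ ≤ (M / 4) * 2 := mul_le_mul_of_nonneg_left (sum_geometric_two_le n) (by positivity)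
        _ = M / 2 := by ring
    calc ∑ k ∈ Finset.range n, ε k = ENNReal.ofReal (∑ k ∈ Finset.range n, m k) :=
          (ENNReal.ofReal_sum_of_nonneg (fun k _ => (hm0 k).le)).symm
      _ ≤ ENNReal.ofReal (M / 2) := ENNReal.ofReal_le_ofReal h1
      _ = μ Set.univ / 2 := hhalfμ
  have hεle : ∀ n, ε n ≤ μ Set.univ / 2 := by
    intro n
    have h2 : (1 / 2 : ℝ) ^ (n + 2) ≤ 1 / 2 := by
      calc (1 / 2 : ℝ) ^ (n + 2) ≤ (1 / 2) ^ 1 :=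
            pow_le_pow_of_le_one (by norm_num) (by norm_num) (by omega)
        _ = 1 / 2 := pow_one _
    have h1 : m n ≤ M / 2 := by
      refine (hmle n).trans ?_
      calc M * (1 / 2) ^ (n + 2) ≤ M * (1 / 2) := mul_le_mul_of_nonneg_left h2 hM0.le
        _ = M / 2 := by ring
    calc ε n ≤ ENNReal.ofReal (M / 2) := ENNReal.ofReal_le_ofReal h1
      _ = μ Set.univ / 2 := hhalfμ
  obtain ⟨A, hAm, hAd, hAμ⟩ := exists_disjoint_seq' μ hna ε hε0 hεt hsum hεle
  -- the function f
  set f : Ω → ℝ := fun t => ∑' n, (A n).indicator (fun _ => lam n) t with hfdef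
  have hfA : ∀ n, ∀ t ∈ A n, f t = lam n := by
    intro n t ht
    have h1 : ∀ k, k ≠ n → (A k).indicator (fun _ => lam k) t = 0 := by
      intro k hk
      apply Set.indicator_of_notMem
      intro htk
      exact (Set.disjoint_left.mp (hAd hk) htk) ht
    have h2 : f t = ∑' k, (A k).indicator (fun _ => lam k) t := rfl
    rw [h2, tsum_eq_single n h1]
    exact Set.indicator_of_mem ht _
  have hfU : ∀ t, t ∉ (⋃ n, A n) → f t = 0 := by
    intro t ht
    have h1 : ∀ n, (A n).indicator (fun _ => lam n) t = 0 := fun n =>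
      Set.indicator_of_notMem (fun h => ht (Set.mem_iUnion.mpr ⟨n, h⟩)) _
    rw [hfdef]
    simp only [h1, tsum_zero]
  have hfHasSum : ∀ t, HasSum (fun n => (A n).indicator (fun _ => lam n) t) (f t) := by
    intro t
    by_cases h : ∃ n, t ∈ A n
    · obtain ⟨n, hn⟩ := h
      have h1 : ∀ k, k ≠ n → (A k).indicator (fun _ => lam k) t = 0 := by
        intro k hk
        apply Set.indicator_of_notMem
        intro htk
        exact (Set.disjoint_left.mp (hAd hk) htk) hn
      have h2 := hasSum_single (f := fun k => (A k).indicator (fun _ => lam k) t) n h1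
      rw [hfA n t hn]
      simpa [Set.indicator_of_mem hn] using h2
    · push_neg at h
      have h1 : (fun n => (A n).indicator (fun _ => lam n) t) = fun _ => (0 : ℝ) :=
        funext fun n => Set.indicator_of_notMem (h n) _
      rw [h1, hfU t (by simpa using h)]
      exact hasSum_zero
  have hfm : Measurable f := by
    apply measurable_of_tendsto_metrizable
      (f := fun N => fun t => ∑ n ∈ Finset.range N, (A n).indicator (fun _ => lam n) t)
    · intro N
      exact Finset.measurable_sum _ (fun n _ => (measurable_const).indicator (hAm n))
    · exact tendsto_pi_nhds.2 fun t => (hfHasSum t).tendsto_sum_nat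
  have hp0 : (p : ℝ≥0∞) ≠ 0 := by
    simp only [ne_eq, ENNReal.coe_eq_zero]
    exact (zero_lt_one.trans_le hp).ne'
  have hpt : (p : ℝ≥0∞) ≠ ⊤ := ENNReal.coe_ne_top
  have hpR : 0 < (p : ℝ) := by exact_mod_cast zero_lt_one.trans_le hp
  -- the lintegral of |f|^p
  have hnorm : ∀ (x : ℝ), ((‖x‖₊ : ℝ≥0∞)) ^ (p : ℝ) = ENNReal.ofReal (|x| ^ (p : ℝ)) := by
    intro x
    rw [show ((‖x‖₊ : ℝ≥0∞)) = ‖x‖ₑ from rfl, Real.enorm_eq_ofReal_abs, ENNReal.ofReal_rpow_of_nonneg (abs_nonneg x) hpR.le]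
  have hint : ∫⁻ t, (‖f t‖₊ : ℝ≥0∞) ^ (p : ℝ) ∂μ < ⊤ := by
    have hUUm : MeasurableSet (⋃ n, A n) := MeasurableSet.iUnion hAm
    rw [← lintegral_add_compl (fun t => (‖f t‖₊ : ℝ≥0∞) ^ (p : ℝ)) hUUm]
    have hcompl : ∫⁻ t in (⋃ n, A n)ᶜ, (‖f t‖₊ : ℝ≥0∞) ^ (p : ℝ) ∂μ = 0 := by
      rw [setLIntegral_congr_fun_ae hUUm.compl (ae_of_all _ (fun t ht => ?_)), lintegral_zero]
      rw [hfU t (by simpa using ht)]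
      simp [ENNReal.zero_rpow_of_pos hpR]
    rw [hcompl, add_zero, lintegral_iUnion hAm hAd]
    have hterm : ∀ n, ∫⁻ t in A n, (‖f t‖₊ : ℝ≥0∞) ^ (p : ℝ) ∂μ ≤
        ENNReal.ofReal (M * (1 / 2) ^ n) := by
      intro n
      have h1 : ∫⁻ t in A n, (‖f t‖₊ : ℝ≥0∞) ^ (p : ℝ) ∂μ = ENNReal.ofReal (X n) * μ (A n) := by
        rw [setLIntegral_congr_fun_ae (hAm n) (ae_of_all _ (fun t ht => ?_)), setLIntegral_const]
        rw [hfA n t ht, hnorm]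
      rw [h1]
      have h2 : X n * m n ≤ M * (1 / 2) ^ n := by
        have h3 : X n * m n ≤ M / 4 ^ (n + 1) := by
          rw [hmdef]
          rw [mul_div_assoc']
          rw [div_le_div_iff₀ (by positivity) (by positivity)]
          nlinarith [hX0 n, pow_pos (by norm_num : (0:ℝ) < 4) (n + 1), hM0]
        refine h3.trans ?_
        rw [div_le_iff₀ (by positivity)]
        have h4 : (1 : ℝ) ≤ (1 / 2) ^ n * 4 ^ (n + 1) := by
          have := hgeom n
          nlinarith [pow_pos (by norm_num : (0:ℝ) < 4) (n + 1),
            pow_le_pow_of_le_one (by norm_num : (0:ℝ) ≤ 1/2) (by norm_num : (1/2:ℝ) ≤ 1)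
              (by omega : n ≤ n + 2)]
        calc M = M * 1 := (mul_one M).symm
          _ ≤ M * ((1 / 2) ^ n * 4 ^ (n + 1)) := mul_le_mul_of_nonneg_left h4 hM0.le
          _ = M * (1 / 2) ^ n * 4 ^ (n + 1) := by ring
      calc ENNReal.ofReal (X n) * μ (A n) ≤ ENNReal.ofReal (X n) * ε n :=
            mul_le_mul_right (hAμ n).2 _
        _ = ENNReal.ofReal (X n * m n) := by
            rw [hεdef, ← ENNReal.ofReal_mul (hX0 n)]
        _ ≤ ENNReal.ofReal (M * (1 / 2) ^ n) := ENNReal.ofReal_le_ofReal h2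
    calc ∑' n, ∫⁻ t in A n, (‖f t‖₊ : ℝ≥0∞) ^ (p : ℝ) ∂μ
        ≤ ∑' n, ENNReal.ofReal (M * (1 / 2) ^ n) := ENNReal.tsum_le_tsum hterm
      _ = ENNReal.ofReal M * ∑' n, (ENNReal.ofReal (1 / 2)) ^ n := by
          rw [← ENNReal.tsum_mul_left]
          congr 1
          funext n
          rw [ENNReal.ofReal_mul hM0.le, ENNReal.ofReal_pow (by norm_num)]
      _ = ENNReal.ofReal M * (1 - ENNReal.ofReal (1 / 2))⁻¹ := by
          rw [ENNReal.tsum_geometric]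
      _ < ⊤ := by
          apply ENNReal.mul_lt_top ENNReal.ofReal_lt_top
          rw [lt_top_iff_ne_top]
          refine ENNReal.inv_ne_top.mpr ?_
          have : ENNReal.ofReal (1 / 2) < 1 := by
            rw [ENNReal.ofReal_lt_one]; norm_num
          exact (tsub_pos_of_lt this).ne'
  have hmem : MemLp f p μ := by
    refine ⟨hfm.aestronglyMeasurable, ?_⟩
    rw [eLpNorm_eq_lintegral_rpow_enorm_toReal hp0 hpt]
    apply ENNReal.rpow_lt_top_of_nonneg (by positivity)
    simpa [enorm_eq_nnnorm] using hint.ne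
  set F : Lp ℝ p μ := hmem.toLp f with hFdef
  have hFae : ⇑F =ᵐ[μ] f := hmem.coeFn_toLp
  have hfinF := hfin F
  have h1 : ∫⁻ t, ENNReal.ofReal (θ (F t)) ∂μ = ∫⁻ t, ENNReal.ofReal (θ (f t)) ∂μ :=
    lintegral_congr_ae (hFae.mono fun t ht => by dsimp only; rw [ht])
  rw [h1] at hfinF
  -- lower bound
  have hlow : (⊤ : ℝ≥0∞) ≤ ∫⁻ t, ENNReal.ofReal (θ (f t)) ∂μ := by
    have hUUm : MeasurableSet (⋃ n, A n) := MeasurableSet.iUnion hAm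
    have h2 : ∫⁻ t in (⋃ n, A n), ENNReal.ofReal (θ (f t)) ∂μ ≤
        ∫⁻ t, ENNReal.ofReal (θ (f t)) ∂μ := lintegral_mono' Measure.restrict_le_self le_rfl
    refine le_trans ?_ h2
    rw [lintegral_iUnion hAm hAd]
    have hterm : ∀ n, (2 : ℝ≥0∞)⁻¹ ≤ ∫⁻ t in A n, ENNReal.ofReal (θ (f t)) ∂μ := by
      intro n
      have h3 : ∫⁻ t in A n, ENNReal.ofReal (θ (f t)) ∂μ =
          ENNReal.ofReal (θ (lam n)) * μ (A n) := by
        rw [setLIntegral_congr_fun_ae (hAm n) (ae_of_all _ (fun t ht => ?_)), setLIntegral_const]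
        rw [hfA n t ht]
      rw [h3]
      have h4 : (1 : ℝ) ≤ θ (lam n) * m n := by
        have h5 := hlam n
        have h6 : (4 : ℝ) ^ (n + 1) * (X n + 1) / M ≤ θ (lam n) := by
          have : c n * X n + c n = 4 ^ (n + 1) * (X n + 1) / M := by
            rw [hcdef]; ring
          linarith [this ▸ h5]
        calc (1 : ℝ) = (4 ^ (n + 1) * (X n + 1) / M) * (M / (4 ^ (n + 1) * (X n + 1))) := by
              field_simp
              rw [div_self (by linarith [hX0 n])]
          _ ≤ θ (lam n) * m n := by
              rw [hmdef]
              exact mul_le_mul_of_nonneg_right h6 (by positivity)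
      calc (2 : ℝ≥0∞)⁻¹ = ENNReal.ofReal 1 / 2 := by
            rw [ENNReal.ofReal_one, one_div]
        _ ≤ ENNReal.ofReal (θ (lam n) * m n) / 2 := by
            exact ENNReal.div_le_div_right (ENNReal.ofReal_le_ofReal h4) 2
        _ = ENNReal.ofReal (θ (lam n)) * (ε n / 2) := by
            rw [hεdef, ENNReal.ofReal_mul (hθ0 _), mul_div_assoc]
        _ ≤ ENNReal.ofReal (θ (lam n)) * μ (A n) := mul_le_mul_right (hAμ n).1 _
    calc (⊤ : ℝ≥0∞) = ∑' _ : ℕ, (2 : ℝ≥0∞)⁻¹ :=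
          (ENNReal.tsum_const_eq_top_of_ne_zero (by norm_num)).symm
      _ ≤ ∑' n, ∫⁻ t in A n, ENNReal.ofReal (θ (f t)) ∂μ := ENNReal.tsum_le_tsum hterm
  exact absurd hfinF (not_lt.mpr hlow)
end
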